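/- arXiv:2010.04499 — 6 statements merged into one kernel-verified Lean document; each statement's English description precedes it below -/
import Mathlib

section
/- Let N be a normal subgroup of a finite group G such that the quotient G/N is cyclic, and let χ be a G-invariant irreducible complex character of N. Then χ extends to an irreducible character of G, i.e., there exists χ̃ ∈ Irr(G) with χ̃ restricted to N equal to χ. -/
noncomputable section

open CategoryTheory

namespace Stmt3Aux

variable {H : Type} [Group H]

/-- Restriction of a representation to an invariant submodule. -/
def subρ (W : FDRep ℂ H) (p : Submodule ℂ W) (hp : ∀ (g : H), ∀ v ∈ p, W.ρ g v ∈ p) :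
    Representation ℂ H p where
  toFun g := (W.ρ g).restrict (hp g)
  map_one' := by ext v; simp [LinearMap.restrict_apply]
  map_mul' g h := by ext v; simp [LinearMap.restrict_apply]

theorem nontrivial_of_simple (W : FDRep ℂ H) [Simple W] : Nontrivial W := by
  by_contra h
  have hs : Subsingleton W := not_nontrivial_iff_subsingleton.mp h
  apply CategoryTheory.id_nonzero W
  apply Action.Hom.ext
  refine FGModuleCat.hom_ext (LinearMap.ext ?_)
  intro v
  exact hs.elim _ _

/-- The inclusion of an invariant submodule as a morphism in `FDRep`. -/
def incl (W : FDRep ℂ H) (p : Submodule ℂ W) (hp : ∀ (g : H), ∀ v ∈ p, W.ρ g v ∈ p) :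
    FDRep.of (subρ W p hp) ⟶ W where
  hom := ConcreteCategory.ofHom p.subtype
  comm g := by
    refine FGModuleCat.hom_ext (LinearMap.ext ?_)
    intro v
    rfl

theorem submodule_eq_bot_or_top_of_simple (W : FDRep ℂ H) [Simple W]
    (p : Submodule ℂ W) (hp : ∀ (g : H), ∀ v ∈ p, W.ρ g v ∈ p) : p = ⊥ ∨ p = ⊤ := by
  by_cases hb : p = ⊥
  · exact Or.inl hb
  · right
    set f := incl W p hp with hf
    have hmono : Mono f := by
      constructor
      intro Z u v huv
      apply Action.Hom.ext
      refine FGModuleCat.hom_ext (LinearMap.ext ?_)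
      intro z
      have := congrArg (fun φ => φ.hom.hom.hom z) huv
      exact Subtype.ext this
    obtain ⟨w, hw, hw0⟩ := Submodule.exists_mem_ne_zero_of_ne_bot hb
    have hne : f ≠ 0 := by
      intro h0
      apply hw0
      have := congrArg (fun φ => φ.hom.hom.hom ⟨w, hw⟩) h0
      exact this
    have hiso : IsIso f := isIso_of_mono_of_nonzero hne
    obtain ⟨i, hi1, hi2⟩ := hiso.out
    rw [eq_top_iff]
    intro w _
    have := congrArg (fun φ => φ.hom.hom.hom w) hi2
    have : f.hom (i.hom w) = w := this
    rw [← this]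
    exact (i.hom w).2

theorem simple_of_submodules (W : FDRep ℂ H) (h1 : Nontrivial W)
    (h2 : ∀ p : Submodule ℂ W, (∀ (g : H), ∀ v ∈ p, W.ρ g v ∈ p) → p = ⊥ ∨ p = ⊤) :
    Simple W := by
  constructor
  intro Y f hm
  constructor
  · intro hiso h0
    obtain ⟨i, hi1, hi2⟩ := hiso.out
    obtain ⟨w, hw⟩ := exists_ne (0 : W)
    apply hw
    have hval := congrArg (fun φ => φ.hom.hom.hom w) hi2
    have : f.hom (i.hom w) = w := hval
    rw [← this, h0]
    rfl
  · intro hne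
    have hcomm : ∀ (g : H) (y : Y), f.hom (Y.ρ g y) = W.ρ g (f.hom y) := by
      intro g y
      exact congrArg (fun φ => φ.hom.hom y) (f.comm g)
    set q : Submodule ℂ W := LinearMap.range (f.hom.hom.hom : Y →ₗ[ℂ] W) with hq
    have hqi : ∀ (g : H), ∀ v ∈ q, W.ρ g v ∈ q := by
      rintro g v ⟨u, rfl⟩
      exact ⟨Y.ρ g u, (hcomm g u).symm ▸ rfl⟩
    rcases h2 q hqi with hbot | htop
    · exfalso
      apply hne
      apply Action.Hom.ext
      refine FGModuleCat.hom_ext (LinearMap.ext ?_)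
      intro y
      have : f.hom y ∈ q := ⟨y, rfl⟩
      rw [hbot] at this
      simp at this ⊢; exact this
    · have hsurj : Function.Surjective (f.hom.hom.hom : Y →ₗ[ℂ] W) := by
        intro w
        have : w ∈ q := htop ▸ Submodule.mem_top
        exact this
      have hker : ∀ (g : H), ∀ v ∈ LinearMap.ker (f.hom.hom.hom : Y →ₗ[ℂ] W),
          Y.ρ g v ∈ LinearMap.ker (f.hom.hom.hom : Y →ₗ[ℂ] W) := by
        intro g v hv
        simp only [LinearMap.mem_ker] at hv ⊢
        exact (hcomm g v).trans (by rw [show ConcreteCategory.hom f.hom v = 0 from hv]; exact map_zero _)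
      have hcomp : incl Y _ hker ≫ f = 0 := by
        apply Action.Hom.ext
        refine FGModuleCat.hom_ext (LinearMap.ext ?_)
        intro v
        exact v.2
      have hzero : incl Y _ hker = 0 := by
        have h0f : (0 : FDRep.of (subρ Y _ hker) ⟶ Y) ≫ f = 0 := by simp
        exact hm.right_cancellation _ _ (hcomp.trans h0f.symm)
      have hinj : Function.Injective (f.hom.hom.hom : Y →ₗ[ℂ] W) := by
        rw [← LinearMap.ker_eq_bot, eq_bot_iff]
        intro v hv
        have := congrArg (fun φ => φ.hom.hom.hom ⟨v, hv⟩) hzero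
        exact this
      set e := LinearEquiv.ofBijective (f.hom.hom.hom : Y →ₗ[ℂ] W) ⟨hinj, hsurj⟩ with he
      refine ⟨⟨⟨ConcreteCategory.ofHom e.symm.toLinearMap, ?_⟩, ?_, ?_⟩⟩
      · intro g
        refine FGModuleCat.hom_ext (LinearMap.ext ?_)
        intro w
        show e.symm (W.ρ g w) = Y.ρ g (e.symm w)
        apply hinj
        show f.hom _ = f.hom _
        have h1 : f.hom (e.symm (W.ρ g w)) = W.ρ g w := e.apply_symm_apply _
        rw [h1, hcomm g (e.symm w)]
        congr 1
        exact (e.apply_symm_apply w).symm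
      · apply Action.Hom.ext
        refine FGModuleCat.hom_ext (LinearMap.ext ?_)
        intro y
        exact e.symm_apply_apply y
      · apply Action.Hom.ext
        refine FGModuleCat.hom_ext (LinearMap.ext ?_)
        intro w
        exact e.apply_symm_apply w

open scoped Classical in
theorem char_orthonormal' {H : Type} [Group H] [Fintype H]
    [Invertible (Fintype.card H : ℂ)] (A B : FDRep ℂ H) [Simple A] [Simple B] :
    ⅟ (Fintype.card H : ℂ) • ∑ g : H, A.character g * B.character g⁻¹ =
      if Nonempty (A ≅ B) then (1 : ℂ) else 0 := by
  have h := FDRep.char_orthonormal A B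
  rw [Nat.card_eq_fintype_card, ← invOf_eq_inv, ← smul_eq_mul] at h
  by_cases hn : Nonempty (A ≅ B)
  · rw [if_pos hn] at h ⊢
    exact_mod_cast h
  · rw [if_neg hn] at h ⊢
    exact_mod_cast h

end Stmt3Aux

end

/-- `χ` is the character of an irreducible (finite-dimensional) complex
representation of `G`. -/
def IsIrrChar {G : Type} [Group G] (χ : G → ℂ) : Prop :=
  ∃ V : FDRep ℂ G, CategoryTheory.Simple V ∧ ∀ g : G, V.character g = χ g

open CategoryTheory Stmt3Aux

set_option maxHeartbeats 2000000 in
theorem stmt3 {G : Type} [Group G] [Finite G] (N : Subgroup G) [hN : N.Normal]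
    (hquot : IsCyclic (G ⧸ N))
    (χ : N → ℂ) (hχ : IsIrrChar χ)
    (hinv : ∀ (g : G) (n : N), χ ⟨g * ↑n * g⁻¹, hN.conj_mem ↑n n.2 g⟩ = χ n) :
    ∃ χt : G → ℂ, IsIrrChar χt ∧ ∀ n : N, χt ↑n = χ n := by
  classical
  obtain ⟨V, hV, hVchar⟩ := hχ
  haveI := hV
  haveI := Fintype.ofFinite G
  haveI : Fintype ↥N := Fintype.ofFinite _
  haveI : Invertible (Fintype.card ↥N : ℂ) :=
    invertibleOfNonzero (by exact_mod_cast Fintype.card_ne_zero)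
  obtain ⟨yq, hy⟩ := hquot.exists_generator
  obtain ⟨x, rfl⟩ := QuotientGroup.mk_surjective yq
  set n : ℕ := orderOf ((x : G ⧸ N)) with hn
  have hnpos : 0 < n := orderOf_pos _
  have hxn : x ^ n ∈ N := by
    have h1 : ((x : G ⧸ N)) ^ n = 1 := pow_orderOf_eq_one _
    rw [← QuotientGroup.mk_pow] at h1
    exact (QuotientGroup.eq_one_iff _).mp h1
  have hmem : ∀ (g : G) (m : ℤ), x ^ (-m) * g ∈ N ↔ ((x : G ⧸ N)) ^ m = ↑g := by
    intro g m
    rw [← QuotientGroup.mk_zpow, QuotientGroup.eq, ← zpow_neg]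
  have hlog : ∀ g : G, ∃ m : ℤ, x ^ (-m) * g ∈ N := fun g => by
    obtain ⟨m, hm⟩ := Subgroup.mem_zpowers_iff.mp (hy (g : G ⧸ N))
    exact ⟨m, (hmem g m).mpr hm⟩
  choose d hd using hlog
  have hmod : ∀ (g : G) (m : ℤ), x ^ (-m) * g ∈ N → ∃ t : ℤ, m = d g + n * t := by
    intro g m hm
    have h1 := (hmem g m).mp hm
    have h2 := (hmem g (d g)).mp (hd g)
    have h3 : ((x : G ⧸ N)) ^ (m - d g) = 1 := by
      rw [zpow_sub, h1, h2, mul_inv_cancel]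
    obtain ⟨t, ht⟩ := orderOf_dvd_iff_zpow_eq_one.mpr h3
    exact ⟨t, by rw [← hn] at ht; omega⟩
  -- the conjugate representation
  set ρx : Representation ℂ ↥N V := V.ρ.comp (MulAut.conjNormal x).toMonoidHom with hρx
  set Vx : FDRep ℂ ↥N := FDRep.of ρx with hVxdef
  have hVxρ : ∀ m : ↥N, Vx.ρ m = V.ρ (MulAut.conjNormal x m) := fun m => rfl
  haveI hsVx : Simple Vx := by
    apply simple_of_submodules
    · exact nontrivial_of_simple V
    · intro p hp
      refine submodule_eq_bot_or_top_of_simple V p ?_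
      intro h v hv
      have h3 := hp ((MulAut.conjNormal x).symm h) v hv
      have h2 : MulAut.conjNormal x ((MulAut.conjNormal x).symm h) = h :=
        MulEquiv.apply_symm_apply _ _
      rw [hVxρ, h2] at h3
      exact h3
  have hχconj : ∀ m : ↥N, χ (MulAut.conjNormal x m) = χ m := by
    intro m
    have he : MulAut.conjNormal x m = ⟨x * ↑m * x⁻¹, hN.conj_mem ↑m m.2 x⟩ :=
      Subtype.ext (by simp)
    rw [he]
    exact hinv x m
  have hchar : ∀ m : ↥N, Vx.character m = V.character m := by
    intro m
    calc Vx.character m = V.character (MulAut.conjNormal x m) := rfl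
      _ = χ (MulAut.conjNormal x m) := hVchar _
      _ = χ m := hχconj m
      _ = V.character m := (hVchar m).symm
  have hiso : Nonempty (Vx ≅ V) := by
    by_contra hc
    have h1 := char_orthonormal' Vx V
    have h2 := char_orthonormal' V V
    rw [if_neg hc] at h1
    rw [if_pos ⟨Iso.refl V⟩] at h2
    have heq : ∑ g : ↥N, Vx.character g * V.character g⁻¹
        = ∑ g : ↥N, V.character g * V.character g⁻¹ :=
      Finset.sum_congr rfl (fun g _ => by rw [hchar])
    rw [heq] at h1
    rw [h1] at h2
    exact zero_ne_one h2
  obtain ⟨iso⟩ := hiso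
  set U₀ := FDRep.isoToLinearEquiv iso with hU₀def
  have hconj : ∀ (m : ↥N) (w : V),
      U₀.symm (V.ρ m w) = V.ρ (MulAut.conjNormal x m) (U₀.symm w) := by
    intro m w
    rw [FDRep.Iso.conj_ρ iso m]
    simp only [LinearEquiv.conj_apply, LinearMap.coe_comp, Function.comp_apply,
      LinearEquiv.coe_coe, LinearEquiv.symm_apply_apply]
    exact U₀.symm_apply_apply _
  set ρu : ↥N →* ((V : Type) →ₗ[ℂ] (V : Type))ˣ := V.ρ.toHomUnits with hρu
  have hρuval : ∀ m : ↥N, (ρu m : (V : Type) →ₗ[ℂ] (V : Type)) = V.ρ m := fun m => rfl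
  set U : ((V : Type) →ₗ[ℂ] (V : Type))ˣ :=
    ⟨U₀.symm.toLinearMap, U₀.toLinearMap,
      by apply LinearMap.ext; intro w;
         exact U₀.symm_apply_apply w,
      by apply LinearMap.ext; intro w;
         exact U₀.apply_symm_apply w⟩ with hUdef
  have hUm : ∀ m : ↥N, U * ρu m = ρu (MulAut.conjNormal x m) * U := by
    intro m
    apply Units.ext
    apply LinearMap.ext
    intro w
    exact hconj m w
  have hUinv : ∀ m : ↥N, U⁻¹ * ρu m = ρu ((MulAut.conjNormal x)⁻¹ m) * U⁻¹ := by
    intro m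
    have h1 := hUm ((MulAut.conjNormal x)⁻¹ m)
    have h2 : MulAut.conjNormal x ((MulAut.conjNormal x)⁻¹ m) = m := by
      exact MulEquiv.apply_symm_apply _ _
    rw [h2] at h1
    have h3 : U⁻¹ * (U * ρu ((MulAut.conjNormal x)⁻¹ m)) * U⁻¹
        = U⁻¹ * (ρu m * U) * U⁻¹ := by rw [h1]
    simpa [mul_assoc] using h3.symm
  have hUz : ∀ (t : ℤ) (m : ↥N),
      U ^ t * ρu m = ρu (MulAut.conjNormal (x ^ t) m) * U ^ t := by
    intro t
    induction t using Int.induction_on with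
    | zero =>
      intro m
      simp
    | succ k ih =>
      intro m
      have hz1 : U ^ ((k : ℤ) + 1) = U ^ (k : ℤ) * U := by
        rw [zpow_add_one]
      rw [hz1, mul_assoc, hUm m, ← mul_assoc, ih, mul_assoc]
      congr 1
      have : MulAut.conjNormal (x ^ (k : ℤ)) (MulAut.conjNormal x m)
          = MulAut.conjNormal (x ^ ((k : ℤ) + 1)) m := by
        rw [← MulAut.mul_apply, ← map_mul, ← zpow_add_one]
      rw [this]
    | pred k ih =>
      intro m
      have hz1 : U ^ (-(k : ℤ) - 1) = U ^ (-(k : ℤ)) * U⁻¹ := by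
        rw [zpow_sub_one]
      rw [hz1, mul_assoc, hUinv m, ← mul_assoc, ih, mul_assoc]
      congr 1
      have : MulAut.conjNormal (x ^ (-(k : ℤ))) ((MulAut.conjNormal x)⁻¹ m)
          = MulAut.conjNormal (x ^ (-(k : ℤ) - 1)) m := by
        rw [← map_inv, ← MulAut.mul_apply, ← map_mul, ← zpow_sub_one]
      rw [this]
  set xN : ↥N := ⟨x ^ n, hxn⟩ with hxNdef
  have hcjxN : ∀ (t : ℤ) (m : ↥N), ((MulAut.conjNormal (x ^ t) m : ↥N) : G)
      = x ^ t * ↑m * x ^ (-t) := by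
    intro t m
    rw [MulAut.conjNormal_apply, zpow_neg]
  have hUn_comm : Commute (U ^ (n : ℤ)) (ρu xN) := by
    have h1 := hUz (n : ℤ) xN
    have h2 : MulAut.conjNormal (x ^ (n : ℤ)) xN = xN := by
      apply Subtype.ext
      rw [hcjxN]
      show x ^ (n : ℤ) * x ^ n * x ^ (-(n : ℤ)) = x ^ n
      rw [zpow_natCast]
      group
    rw [h2] at h1
    exact h1
  set ε : ((V : Type) →ₗ[ℂ] (V : Type))ˣ := U ^ (n : ℤ) * (ρu xN)⁻¹ with hεdef
  have hεcomm : ∀ m : ↥N, ε * ρu m = ρu m * ε := by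
    intro m
    have e1 : ε * ρu m = U ^ (n : ℤ) * ρu (xN⁻¹ * m) := by
      rw [hεdef, mul_assoc, ← map_inv, ← map_mul]
    have e2 : U ^ (n : ℤ) * ρu (xN⁻¹ * m)
        = ρu (MulAut.conjNormal (x ^ (n : ℤ)) (xN⁻¹ * m)) * U ^ (n : ℤ) := hUz _ _
    have e3 : MulAut.conjNormal (x ^ (n : ℤ)) (xN⁻¹ * m) = m * xN⁻¹ := by
      apply Subtype.ext
      rw [hcjxN]
      show x ^ (n : ℤ) * ((x ^ n)⁻¹ * ↑m) * x ^ (-(n : ℤ)) = ↑m * (x ^ n)⁻¹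
      rw [zpow_natCast, zpow_neg, zpow_natCast]
      group
    have e4 : ρu (m * xN⁻¹) * U ^ (n : ℤ) = ρu m * ((ρu xN)⁻¹ * U ^ (n : ℤ)) := by
      rw [map_mul, map_inv, mul_assoc]
    rw [e1, e2, e3, e4, hεdef]
    congr 1
    exact hUn_comm.inv_right.eq.symm
  -- ε is an endomorphism of V, hence a scalar by Schur's lemma
  set εhom : V ⟶ V := ⟨ConcreteCategory.ofHom (ε : (V : Type) →ₗ[ℂ] (V : Type)), by
    intro m
    refine FGModuleCat.hom_ext (LinearMap.ext ?_)
    intro w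
    have := LinearMap.congr_fun (congrArg Units.val (hεcomm m)) w
    exact this⟩ with hεhomdef
  obtain ⟨c, hc⟩ := CategoryTheory.endomorphism_simple_eq_smul_id (𝕜 := ℂ) εhom
  have hcval : ∀ w : V, (ε : (V : Type) →ₗ[ℂ] (V : Type)) w = c • w := by
    intro w
    have := congrArg (fun φ => φ.hom.hom.hom w) hc
    exact this.symm
  haveI : Nontrivial (V : Type) := nontrivial_of_simple V
  have hc0 : c ≠ 0 := by
    intro h0
    obtain ⟨w, hw⟩ := exists_ne (0 : (V : Type))
    apply hw
    have h1 := LinearMap.congr_fun (congrArg Units.val (inv_mul_cancel ε)) w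
    simp only [Units.val_mul, Module.End.mul_apply, Units.val_one, Module.End.one_apply] at h1
    rw [hcval w, h0, zero_smul, map_zero] at h1
    exact h1.symm
  obtain ⟨ζ, hζ⟩ := IsAlgClosed.exists_pow_nat_eq (k := ℂ) c⁻¹ hnpos
  have hζ0 : ζ ≠ 0 := by
    intro h0
    rw [h0, zero_pow hnpos.ne'] at hζ
    exact inv_ne_zero hc0 hζ.symm
  set sE : ((V : Type) →ₗ[ℂ] (V : Type))ˣ :=
    Units.map (algebraMap ℂ (Module.End ℂ (V : Type))).toMonoidHom (Units.mk0 ζ hζ0) with hsEdef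
  have hsEval : (sE : (V : Type) →ₗ[ℂ] (V : Type)) = algebraMap ℂ (Module.End ℂ (V : Type)) ζ :=
    rfl
  have hsEc : ∀ A : ((V : Type) →ₗ[ℂ] (V : Type))ˣ, Commute sE A := by
    intro A
    apply Units.ext
    show (sE : (V : Type) →ₗ[ℂ] (V : Type)) * A = A * sE
    rw [hsEval]
    exact Algebra.commutes ζ (A : (V : Type) →ₗ[ℂ] (V : Type))
  set Uf : ((V : Type) →ₗ[ℂ] (V : Type))ˣ := sE * U with hUfdef
  have hUfz : ∀ (t : ℤ) (m : ↥N),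
      Uf ^ t * ρu m = ρu (MulAut.conjNormal (x ^ t) m) * Uf ^ t := by
    intro t m
    have h1 : Uf ^ t = sE ^ t * U ^ t := (hsEc U).mul_zpow t
    rw [h1, mul_assoc, hUz t m, ← mul_assoc, ← mul_assoc]
    congr 1
    exact ((hsEc (ρu (MulAut.conjNormal (x ^ t) m))).zpow_left t).eq
  have hεxN : ε * ρu xN = U ^ (n : ℤ) := by
    rw [hεdef, mul_assoc]
    simp
  have hεalg : (ε : (V : Type) →ₗ[ℂ] (V : Type))
      = algebraMap ℂ (Module.End ℂ (V : Type)) c := by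
    apply LinearMap.ext
    intro w
    rw [hcval w]
    rfl
  have hsEn : sE ^ n * ε = 1 := by
    apply Units.ext
    show (sE : (V : Type) →ₗ[ℂ] (V : Type)) ^ n * ε = 1
    rw [hsEval, hεalg, ← map_pow, ← map_mul, hζ, inv_mul_cancel₀ hc0, map_one]
  have hUfn : Uf ^ (n : ℤ) = ρu xN := by
    have h1 : Uf ^ (n : ℤ) = sE ^ (n : ℤ) * U ^ (n : ℤ) := (hsEc U).mul_zpow _
    rw [h1, ← hεxN, ← mul_assoc]
    rw [zpow_natCast, hsEn, one_mul]
  -- the extended representation as a function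
  set F : G → ((V : Type) →ₗ[ℂ] (V : Type))ˣ :=
    fun g => Uf ^ (d g) * ρu ⟨x ^ (-(d g)) * g, hd g⟩ with hFdef
  have hFeq : ∀ (g : G) (m : ℤ) (h : x ^ (-m) * g ∈ N),
      F g = Uf ^ m * ρu ⟨x ^ (-m) * g, h⟩ := by
    intro g m h
    obtain ⟨t, ht⟩ := hmod g m h
    have h1 : Uf ^ m = Uf ^ (d g) * (Uf ^ (n : ℤ)) ^ t := by
      rw [← zpow_mul, ← zpow_add, ht]
    have h2 : xN ^ t * (⟨x ^ (-m) * g, h⟩ : ↥N)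
        = (⟨x ^ (-(d g)) * g, hd g⟩ : ↥N) := by
      apply Subtype.ext
      show ((x ^ n : G) ^ t) * (x ^ (-m) * g) = x ^ (-(d g)) * g
      rw [← zpow_natCast x n, ← zpow_mul, ← mul_assoc, ← zpow_add]
      congr 2
      omega
    show Uf ^ (d g) * ρu ⟨x ^ (-(d g)) * g, hd g⟩ = Uf ^ m * ρu ⟨x ^ (-m) * g, h⟩
    rw [h1, hUfn, mul_assoc, ← map_zpow, ← map_mul, h2]
  have hFmul : ∀ g h : G, F (g * h) = F g * F h := by
    intro g h
    set a := d g with hadef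
    set b := d h with hbdef
    set mg : ↥N := ⟨x ^ (-a) * g, hd g⟩ with hmgdef
    set mh : ↥N := ⟨x ^ (-b) * h, hd h⟩ with hmhdef
    set C : ↥N := MulAut.conjNormal (x ^ (-b)) mg with hCdef
    have key : ρu mg * Uf ^ b = Uf ^ b * ρu C := by
      have h1 := hUfz (-b) mg
      have h2 : Uf ^ b * (Uf ^ (-b) * ρu mg) * Uf ^ b
          = Uf ^ b * (ρu C * Uf ^ (-b)) * Uf ^ b := by rw [h1, hCdef]
      simp only [mul_assoc, ← zpow_add] at h2
      simpa [mul_assoc] using h2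
    have hcoe : ((C * mh : ↥N) : G) = x ^ (-(a + b)) * (g * h) := by
      rw [Subgroup.coe_mul, hCdef, hcjxN, hmgdef, hmhdef]
      show x ^ (-b) * (x ^ (-a) * g) * x ^ (-(-b)) * (x ^ (-b) * h)
          = x ^ (-(a + b)) * (g * h)
      group
    have hmem2 : x ^ (-(a + b)) * (g * h) ∈ N := by
      rw [← hcoe]
      exact (C * mh).2
    have hst : (⟨x ^ (-(a + b)) * (g * h), hmem2⟩ : ↥N) = C * mh := Subtype.ext hcoe.symm
    rw [hFeq (g * h) (a + b) hmem2, hst]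
    show Uf ^ (a + b) * ρu (C * mh) = (Uf ^ a * ρu mg) * (Uf ^ b * ρu mh)
    calc Uf ^ (a + b) * ρu (C * mh)
        = Uf ^ a * ((Uf ^ b * ρu C) * ρu mh) := by
          rw [zpow_add, map_mul]; simp only [mul_assoc]
      _ = Uf ^ a * ((ρu mg * Uf ^ b) * ρu mh) := by rw [key]
      _ = Uf ^ a * ρu mg * (Uf ^ b * ρu mh) := by simp only [mul_assoc]
  set ρt : G →* ((V : Type) →ₗ[ℂ] (V : Type))ˣ := MonoidHom.mk' F hFmul with hρtdef
  set ρfin : Representation ℂ G (V : Type) :=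
    (Units.coeHom ((V : Type) →ₗ[ℂ] (V : Type))).comp ρt with hρfindef
  set W : FDRep ℂ G := FDRep.of ρfin with hWdef
  have hres : ∀ m : ↥N, ρfin ↑m = V.ρ m := by
    intro m
    show ↑(F ↑m) = V.ρ m
    have h0 : x ^ (-(0 : ℤ)) * (m : G) ∈ N := by simp only [neg_zero, zpow_zero, one_mul]; exact m.2
    rw [hFeq ↑m 0 h0]
    have he : (⟨x ^ (-(0 : ℤ)) * (m : G), h0⟩ : ↥N) = m := Subtype.ext (by simp)
    rw [he, zpow_zero, one_mul]
    exact hρuval m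
  haveI hsW : Simple W := by
    apply simple_of_submodules
    · exact nontrivial_of_simple V
    · intro p hp
      refine submodule_eq_bot_or_top_of_simple V p ?_
      intro m v hv
      have h1 := hp ↑m v hv
      rwa [show W.ρ ↑m = V.ρ m from hres m] at h1
  refine ⟨W.character, ⟨W, hsW, fun g => rfl⟩, ?_⟩
  intro m
  show LinearMap.trace ℂ _ (W.ρ ↑m) = χ m
  rw [show W.ρ ↑m = V.ρ m from hres m]
  exact hVchar m
end

section
/- Let N be a normal subgroup of a finite group G and let χ̃₁, χ̃₂ be irreducible complex characters of G both of which restrict to the same irreducible character χ of N. Then there exists a unique linear character λ of G with N ≤ ker(λ) such that χ̃₂ = χ̃₁·λ (pointwise product). -/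
noncomputable section StmtAux

open CategoryTheory Module FDRep

private lemma avg_char' {H : Type} [Group H] [Fintype H] [Invertible (Fintype.card H : ℂ)]
    (X Y : FDRep ℂ H) :
    ⅟ (Fintype.card H : ℂ) • ∑ h : H, Y.character h * X.character h⁻¹ =
      finrank ℂ (X ⟶ Y) := by
  conv_lhs =>
    enter [2, 2, g]
    rw [mul_comm, ← char_dual, ← Pi.mul_apply, ← char_tensor]
    rw [char_iso (FDRep.dualTensorIsoLinHom X.ρ Y)]
  rw [invOf_eq_inv, smul_eq_mul, Fintype.card_eq_nat_card, average_char_eq_finrank_invariants]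
  rw [show (of (Representation.linHom X.ρ Y.ρ)).ρ = Representation.linHom X.ρ Y.ρ from
    FDRep.of_ρ' _]
  erw [(Representation.linHom.invariantsEquivFDRepHom (k := ℂ) (G := H) X Y).finrank_eq]

private lemma sum_char' {H : Type} [Group H] [Fintype H] (X Y : FDRep ℂ H) :
    ∑ h : H, Y.character h * X.character h⁻¹ =
      (Fintype.card H : ℂ) * finrank ℂ (X ⟶ Y) := by
  haveI : Invertible (Fintype.card H : ℂ) :=
    invertibleOfNonzero (Nat.cast_ne_zero.mpr Fintype.card_ne_zero)
  have h := avg_char' X Y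
  calc ∑ h : H, Y.character h * X.character h⁻¹
      = (Fintype.card H : ℂ) * (⅟ (Fintype.card H : ℂ) •
          ∑ h : H, Y.character h * X.character h⁻¹) := by
        rw [smul_eq_mul, ← mul_assoc, mul_invOf_self, one_mul]
    _ = (Fintype.card H : ℂ) * finrank ℂ (X ⟶ Y) := by rw [h]

private lemma finrank_hom_eq_of_char_eq' {H : Type} [Group H] [Fintype H]
    (X Y X' Y' : FDRep ℂ H)
    (hX : ∀ h, X.character h = X'.character h) (hY : ∀ h, Y.character h = Y'.character h) :
    finrank ℂ (X ⟶ Y) = finrank ℂ (X' ⟶ Y') := by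
  have h1 := sum_char' X Y
  have h2 := sum_char' X' Y'
  have hs : ∑ h : H, Y.character h * X.character h⁻¹ =
      ∑ h : H, Y'.character h * X'.character h⁻¹ :=
    Finset.sum_congr rfl fun h _ => by rw [hX, hY]
  rw [hs, h2] at h1
  have hc : (Fintype.card H : ℂ) ≠ 0 := Nat.cast_ne_zero.mpr Fintype.card_ne_zero
  exact_mod_cast mul_left_cancel₀ hc h1.symm

variable {H : Type} [Group H]

/-- restriction of a representation to an invariant submodule -/
private def subrep' (Y : FDRep ℂ H) (p : Submodule ℂ Y) (hp : ∀ (g : H), ∀ v ∈ p, Y.ρ g v ∈ p) :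
    FDRep ℂ H :=
  FDRep.of (V := p)
    { toFun := fun g => (Y.ρ g).restrict (fun v hv => hp g v hv)
      map_one' := by ext v; simp
      map_mul' := fun g h => by ext v; simp }

private def subrepHom' (Y : FDRep ℂ H) (p : Submodule ℂ Y)
    (hp : ∀ (g : H), ∀ v ∈ p, Y.ρ g v ∈ p) : subrep' Y p hp ⟶ Y where
  hom := ⟨ModuleCat.ofHom p.subtype⟩
  comm := fun _ => rfl

private instance subrepHomMono' (Y : FDRep ℂ H) (p : Submodule ℂ Y)
    (hp : ∀ (g : H), ∀ v ∈ p, Y.ρ g v ∈ p) : Mono (subrepHom' Y p hp) := by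
  constructor
  intro Z a b hab
  ext v
  have h2 : p.subtype.comp a.hom.hom.hom = p.subtype.comp b.hom.hom.hom :=
    congrArg (fun u => u.hom.hom.hom) hab
  exact Subtype.ext (congrFun (congrArg (fun (f : Z.V →ₗ[ℂ] Y.V) => (f : Z.V → Y.V)) h2) v)

private lemma iso_of_hom_ne_zero' (Y X : FDRep ℂ H) [Simple Y] (f : Y ⟶ X) (hf : f ≠ 0)
    (hdim : finrank ℂ X = finrank ℂ Y) : Nonempty (Y ≅ X) := by
  have hcomm : ∀ (g : H) (v : Y), f.hom (Y.ρ g v) = X.ρ g (f.hom v) := by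
    intro g v
    have h2 : f.hom.hom.hom.comp (Y.ρ g) = (X.ρ g).comp f.hom.hom.hom :=
      congrArg (fun u => u.hom.hom) (f.comm g)
    exact congrFun (congrArg (fun (u : Y.V →ₗ[ℂ] X.V) => (u : Y.V → X.V)) h2) v
  set p : Submodule ℂ Y := LinearMap.ker f.hom.hom.hom with hp
  have hinv : ∀ (g : H), ∀ v ∈ p, Y.ρ g v ∈ p := by
    intro g v hv
    have hv' : f.hom v = 0 := hv
    have : f.hom (Y.ρ g v) = 0 := by rw [hcomm g v, hv', map_zero]
    exact this
  have hbot : p = ⊥ := by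
    by_contra hne
    obtain ⟨v, hvp, hv0⟩ := Submodule.exists_mem_ne_zero_of_ne_bot hne
    have hi : subrepHom' Y p hinv ≠ 0 := by
      intro h
      have : p.subtype ⟨v, hvp⟩ = (0 : Y) := by
        rw [show p.subtype = (subrepHom' Y p hinv).hom.hom.hom from rfl, h]
        rfl
      exact hv0 this
    have : IsIso (subrepHom' Y p hinv) := (Simple.mono_isIso_iff_nonzero _).mpr hi
    have hsurj : Function.Surjective p.subtype := by
      intro y
      refine ⟨(inv (subrepHom' Y p hinv)).hom y, ?_⟩
      have h2 : p.subtype.comp (inv (subrepHom' Y p hinv)).hom.hom.hom = LinearMap.id :=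
        congrArg (fun u => u.hom.hom.hom) (IsIso.inv_hom_id (subrepHom' Y p hinv))
      exact congrFun (congrArg (fun (u : Y.V →ₗ[ℂ] Y.V) => (u : Y.V → Y.V)) h2) y
    have htop : p = ⊤ := by
      rw [← Submodule.range_subtype p]
      exact LinearMap.range_eq_top.mpr hsurj
    apply hf
    have h0 : f.hom.hom.hom = 0 := by
      apply LinearMap.ext
      intro v
      have : v ∈ p := by rw [htop]; trivial
      exact this
    apply Action.Hom.ext
    apply FGModuleCat.hom_ext
    exact h0
  have hinj : Function.Injective f.hom.hom.hom := LinearMap.ker_eq_bot.mp hbot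
  have hsurj : Function.Surjective f.hom.hom.hom :=
    (LinearMap.injective_iff_surjective_of_finrank_eq_finrank hdim.symm).mp hinj
  let e : Y ≃ₗ[ℂ] X := LinearEquiv.ofBijective f.hom.hom.hom ⟨hinj, hsurj⟩
  exact ⟨Action.mkIso e.toFGModuleCatIso (fun g => f.comm g)⟩

/-- restriction of a `G`-representation to a subgroup -/
private def fdres {G : Type} [Group G] (K : Subgroup G) (V : FDRep ℂ G) : FDRep ℂ K :=
  (Action.res (FGModuleCat ℂ) K.subtype).obj V

end StmtAux

open CategoryTheory in
theorem stmt5 {G : Type} [Group G] [Finite G] (N : Subgroup G) [hN : N.Normal]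
    (χ : N → ℂ) (hχ : IsIrrChar χ)
    (χt₁ χt₂ : G → ℂ) (h1 : IsIrrChar χt₁) (h2 : IsIrrChar χt₂)
    (hr1 : ∀ n : N, χt₁ ↑n = χ n) (hr2 : ∀ n : N, χt₂ ↑n = χ n) :
    ∃! lam : G →* ℂˣ, (∀ n ∈ N, lam n = 1) ∧ ∀ g : G, χt₂ g = χt₁ g * (lam g : ℂ) := by
  classical
  haveI : Fintype G := Fintype.ofFinite G
  haveI : Fintype ↥N := Fintype.ofFinite ↥N
  obtain ⟨W, hWs, hWc⟩ := hχ
  obtain ⟨V₁, hV₁s, hV₁c⟩ := h1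
  obtain ⟨V₂, hV₂s, hV₂c⟩ := h2
  haveI := hWs
  haveI := hV₁s
  haveI := hV₂s
  set X₁ : FDRep ℂ ↥N := fdres N V₁ with hX₁def
  set X₂ : FDRep ℂ ↥N := fdres N V₂ with hX₂def
  have hc1 : ∀ n : ↥N, X₁.character n = W.character n := fun n => by
    show V₁.character ↑n = _
    rw [hV₁c, hr1, hWc]
  have hc2 : ∀ n : ↥N, X₂.character n = W.character n := fun n => by
    show V₂.character ↑n = _
    rw [hV₂c, hr2, hWc]
  have hdim1 : Module.finrank ℂ X₁ = Module.finrank ℂ W := by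
    have h := hc1 1
    rw [FDRep.char_one, FDRep.char_one] at h
    exact_mod_cast h
  have hdim2 : Module.finrank ℂ X₂ = Module.finrank ℂ W := by
    have h := hc2 1
    rw [FDRep.char_one, FDRep.char_one] at h
    exact_mod_cast h
  have hEndW : Module.finrank ℂ (W ⟶ W) = 1 :=
    CategoryTheory.finrank_endomorphism_simple_eq_one ℂ W
  have hhom1 : Module.finrank ℂ (W ⟶ X₁) = 1 :=
    (finrank_hom_eq_of_char_eq' W X₁ W W (fun _ => rfl) hc1).trans hEndW
  have hhom2 : Module.finrank ℂ (W ⟶ X₂) = 1 :=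
    (finrank_hom_eq_of_char_eq' W X₂ W W (fun _ => rfl) hc2).trans hEndW
  obtain ⟨f₁, hf₁⟩ : ∃ f : W ⟶ X₁, f ≠ 0 := by
    by_contra h
    push_neg at h
    haveI : Subsingleton (W ⟶ X₁) := ⟨fun a b => by rw [h a, h b]⟩
    rw [Module.finrank_zero_of_subsingleton] at hhom1
    exact one_ne_zero hhom1.symm
  obtain ⟨f₂, hf₂⟩ : ∃ f : W ⟶ X₂, f ≠ 0 := by
    by_contra h
    push_neg at h
    haveI : Subsingleton (W ⟶ X₂) := ⟨fun a b => by rw [h a, h b]⟩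
    rw [Module.finrank_zero_of_subsingleton] at hhom2
    exact one_ne_zero hhom2.symm
  obtain ⟨i₁⟩ := iso_of_hom_ne_zero' W X₁ f₁ hf₁ hdim1
  obtain ⟨i₂⟩ := iso_of_hom_ne_zero' W X₂ f₂ hf₂ hdim2
  obtain ⟨T, hTdef⟩ : ∃ T : X₁ ⟶ X₂, T = i₁.inv ≫ i₂.hom := ⟨_, rfl⟩
  have hT : T ≠ 0 := by
    intro h
    apply CategoryTheory.id_nonzero W
    have : 𝟙 W = i₁.hom ≫ T ≫ i₂.inv := by simp [hTdef]
    rw [this, h]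
    simp
  obtain ⟨Tl, hTl⟩ : ∃ Tl : V₁ →ₗ[ℂ] V₂, Tl = T.hom.hom.hom := ⟨_, rfl⟩
  have hThom : Tl ≠ 0 := by
    rw [hTl]
    intro h
    apply hT
    apply Action.Hom.ext
    apply FGModuleCat.hom_ext
    exact h
  have hEnd12 : Module.finrank ℂ (X₁ ⟶ X₂) = 1 :=
    (finrank_hom_eq_of_char_eq' X₁ X₂ W W hc1 hc2).trans hEndW
  have hEnd11 : Module.finrank ℂ (X₁ ⟶ X₁) = 1 :=
    (finrank_hom_eq_of_char_eq' X₁ X₁ W W hc1 hc1).trans hEndW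
  have hTcomp : ∀ (m : G), m ∈ N → Tl.comp (V₁.ρ m) = (V₂.ρ m).comp Tl :=
    fun m hm => by rw [hTl]; exact congrArg (fun u => u.hom.hom) (T.comm ⟨m, hm⟩)
  have rho_comp : ∀ (V : FDRep ℂ G) (a b : G), (V.ρ a).comp (V.ρ b) = V.ρ (a * b) :=
    fun V a b => by rw [map_mul]; rfl
  have hScomm : ∀ g : G, ∀ n : ↥N,
      (((V₂.ρ g).comp (Tl.comp (V₁.ρ g⁻¹))).comp (V₁.ρ (↑n : G)) : V₁ →ₗ[ℂ] V₂)
        = (V₂.ρ (↑n : G)).comp ((V₂.ρ g).comp (Tl.comp (V₁.ρ g⁻¹))) := by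
    intro g n
    have hm : g⁻¹ * ↑n * g ∈ N := by simpa using hN.conj_mem ↑n n.2 g⁻¹
    calc ((V₂.ρ g).comp (Tl.comp (V₁.ρ g⁻¹))).comp (V₁.ρ (↑n : G))
        = (V₂.ρ g).comp (Tl.comp ((V₁.ρ g⁻¹).comp (V₁.ρ (↑n : G)))) := by
          simp only [LinearMap.comp_assoc]
      _ = (V₂.ρ g).comp (Tl.comp ((V₁.ρ (g⁻¹ * ↑n * g)).comp (V₁.ρ g⁻¹))) := by
          rw [rho_comp V₁ g⁻¹ ↑n, rho_comp V₁ (g⁻¹ * ↑n * g) g⁻¹,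
            show (g⁻¹ * (↑n : G) * g) * g⁻¹ = g⁻¹ * ↑n by group]
      _ = (V₂.ρ g).comp ((Tl.comp (V₁.ρ (g⁻¹ * ↑n * g))).comp (V₁.ρ g⁻¹)) := by
          simp only [LinearMap.comp_assoc]
      _ = (V₂.ρ g).comp (((V₂.ρ (g⁻¹ * ↑n * g)).comp Tl).comp (V₁.ρ g⁻¹)) := by
          rw [hTcomp _ hm]
      _ = ((V₂.ρ g).comp (V₂.ρ (g⁻¹ * ↑n * g))).comp (Tl.comp (V₁.ρ g⁻¹)) := by
          simp only [LinearMap.comp_assoc]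
      _ = (V₂.ρ (↑n * g)).comp (Tl.comp (V₁.ρ g⁻¹)) := by
          rw [rho_comp V₂ g (g⁻¹ * ↑n * g),
            show (g * (g⁻¹ * (↑n : G) * g)) = ↑n * g by group]
      _ = (V₂.ρ (↑n : G)).comp ((V₂.ρ g).comp (Tl.comp (V₁.ρ g⁻¹))) := by
          rw [← rho_comp V₂ ↑n g]
          simp only [LinearMap.comp_assoc]
  let S : G → (X₁ ⟶ X₂) := fun g =>
    { hom := ⟨ModuleCat.ofHom ((V₂.ρ g).comp (Tl.comp (V₁.ρ g⁻¹)))⟩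
      comm := fun n => FGModuleCat.hom_ext (hScomm g n) }
  have hSdef : ∀ g : G, @Eq (V₁ →ₗ[ℂ] V₂) (S g).hom.hom.hom ((V₂.ρ g).comp (Tl.comp (V₁.ρ g⁻¹))) := fun _ => rfl
  obtain ⟨cc, hcc⟩ : ∃ cc : G → ℂ, ∀ g : G, cc g • T = S g := by
    have hTex := (finrank_eq_one_iff_of_nonzero' T hT).mp hEnd12
    exact ⟨fun g => (hTex (S g)).choose, fun g => (hTex (S g)).choose_spec⟩
  have hcch : ∀ g : G, @Eq (V₁ →ₗ[ℂ] V₂) (cc g • Tl) (S g).hom.hom.hom := fun g => by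
    rw [hTl]; exact congrArg (fun u => u.hom.hom.hom) (hcc g)
  have cc_unique : ∀ c c' : ℂ, c • Tl = c' • Tl → c = c' := by
    intro c c' h
    have h0 : (c - c') • Tl = 0 := by rw [sub_smul, h, sub_self]
    rcases smul_eq_zero.mp h0 with h' | h'
    · exact sub_eq_zero.mp h'
    · exact absurd h' hThom
  have cc1 : cc 1 = 1 := by
    apply cc_unique
    rw [hcch 1, hSdef, one_smul, inv_one, map_one, map_one, Module.End.one_eq_id,
      Module.End.one_eq_id, LinearMap.comp_id, LinearMap.id_comp]
  have ccmul : ∀ g h : G, cc (g * h) = cc g * cc h := by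
    intro g h
    apply cc_unique
    rw [hcch (g * h), hSdef]
    calc (V₂.ρ (g * h)).comp (Tl.comp (V₁.ρ (g * h)⁻¹))
        = ((V₂.ρ g).comp (V₂.ρ h)).comp (Tl.comp ((V₁.ρ h⁻¹).comp (V₁.ρ g⁻¹))) := by
          rw [mul_inv_rev, ← rho_comp V₂ g h, ← rho_comp V₁ h⁻¹ g⁻¹]
      _ = (V₂.ρ g).comp (((V₂.ρ h).comp (Tl.comp (V₁.ρ h⁻¹))).comp (V₁.ρ g⁻¹)) := by
          simp only [LinearMap.comp_assoc]
      _ = (V₂.ρ g).comp ((cc h • Tl).comp (V₁.ρ g⁻¹)) := by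
          rw [← hSdef h, ← hcch h]
      _ = cc h • ((V₂.ρ g).comp (Tl.comp (V₁.ρ g⁻¹))) := by
          rw [LinearMap.smul_comp, LinearMap.comp_smul]
      _ = cc h • (cc g • Tl) := by rw [← hSdef g, ← hcch g]
      _ = (cc g * cc h) • Tl := by rw [smul_smul, mul_comm]
  have ccN : ∀ n : ↥N, cc ↑n = 1 := by
    intro n
    apply cc_unique
    rw [hcch ↑n, hSdef, one_smul]
    have hninv : ((↑n : G))⁻¹ ∈ N := N.inv_mem n.2
    rw [hTcomp _ hninv, ← LinearMap.comp_assoc, rho_comp V₂ ↑n (↑n)⁻¹, mul_inv_cancel,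
      map_one, Module.End.one_eq_id, LinearMap.id_comp]
  have ccinv : ∀ g : G, cc g * cc g⁻¹ = 1 := fun g => by
    rw [← ccmul, mul_inv_cancel, cc1]
  have ccinv' : ∀ g : G, cc g⁻¹ * cc g = 1 := fun g => by
    rw [← ccmul, inv_mul_cancel, cc1]
  let lam : G →* ℂˣ :=
    { toFun := fun g => ⟨cc g, cc g⁻¹, ccinv g, ccinv' g⟩
      map_one' := by
        apply Units.ext
        exact cc1
      map_mul' := fun g h => by
        apply Units.ext
        exact ccmul g h }
  haveI : CategoryTheory.IsIso T := by
    rw [hTdef]; infer_instance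
  haveI hfin1 : Module.Finite ℂ ↑X₁.V.obj := inferInstanceAs (FiniteDimensional ℂ X₁)
  haveI hfin2 : Module.Finite ℂ ↑X₂.V.obj := inferInstanceAs (FiniteDimensional ℂ X₂)
  have key : ∀ g : G, χt₂ g = χt₁ g * cc g := by
    intro g
    obtain ⟨Ti, hTi⟩ : ∃ Ti : V₂ →ₗ[ℂ] V₁, Ti = (CategoryTheory.inv T).hom.hom.hom := ⟨_, rfl⟩
    have hti : Tl.comp (Ti) = LinearMap.id := by
      rw [hTl, hTi]; exact congrArg (fun u => u.hom.hom.hom) (CategoryTheory.IsIso.inv_hom_id T)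
    have hit : (Ti).comp Tl = LinearMap.id := by
      rw [hTl, hTi]; exact congrArg (fun u => u.hom.hom.hom) (CategoryTheory.IsIso.hom_inv_id T)
    have step : (V₂.ρ g).comp Tl = cc g • (Tl.comp (V₁.ρ g)) := by
      have h2 := congrArg (fun (u : V₁ →ₗ[ℂ] V₂) =>
        u.comp (V₁.ρ g)) ((hcch g).trans (hSdef g))
      simp only [LinearMap.smul_comp, LinearMap.comp_assoc] at h2
      rw [rho_comp V₁ g⁻¹ g, inv_mul_cancel, map_one, Module.End.one_eq_id,
        LinearMap.comp_id] at h2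
      exact h2.symm
    have e0 : (V₂.ρ g : _ →ₗ[ℂ] _)
        = ((V₂.ρ g).comp Tl).comp (Ti) := by
      rw [LinearMap.comp_assoc, hti]
      rfl
    rw [← hV₂c g]
    show LinearMap.trace ℂ _ (V₂.ρ g) = χt₁ g * cc g
    rw [e0, step, LinearMap.smul_comp, map_smul, LinearMap.trace_comp_comm',
      ← LinearMap.comp_assoc, hit, LinearMap.id_comp, smul_eq_mul, mul_comm]
    exact congrArg (· * cc g) (hV₁c g)
  have uniq : ∀ a b : G →* ℂˣ, (∀ n ∈ N, a n = 1) → (∀ g, χt₂ g = χt₁ g * (a g : ℂ)) →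
      (∀ n ∈ N, b n = 1) → (∀ g, χt₂ g = χt₁ g * (b g : ℂ)) → a = b := by
    intro a b haN haC hbN hbC
    set ν : G →* ℂˣ := a * b⁻¹ with hν
    set K : Subgroup G := ν.ker with hK
    haveI : Fintype ↥K := Fintype.ofFinite ↥K
    have hNK : ∀ g : G, g ∈ N → g ∈ K := by
      intro g hg
      show ν g = 1
      rw [hν]
      simp [haN g hg, hbN g hg]
    have hmem : ∀ g : G, χt₁ g ≠ 0 → g ∈ K := by
      intro g h0
      show ν g = 1
      have h3 : χt₁ g * (a g : ℂ) = χt₁ g * (b g : ℂ) := (haC g).symm.trans (hbC g)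
      have hab : a g = b g := Units.ext (mul_left_cancel₀ h0 h3)
      rw [hν]
      simp [hab]
    set Y₁ : FDRep ℂ ↥K := fdres K V₁ with hY₁
    have hY₁c : ∀ k : ↥K, Y₁.character k = χt₁ ↑k := fun k => hV₁c ↑k
    have hid : (𝟙 Y₁ : Y₁ ⟶ Y₁) ≠ 0 := by
      intro h
      apply CategoryTheory.id_nonzero V₁
      apply Action.Hom.ext
      have h2 : (𝟙 Y₁ : Y₁ ⟶ Y₁).hom = (0 : Y₁ ⟶ Y₁).hom := congrArg Action.Hom.hom h
      exact h2
    have hpos : 0 < Module.finrank ℂ (Y₁ ⟶ Y₁) :=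
      Module.finrank_pos_iff_exists_ne_zero.mpr ⟨𝟙 Y₁, hid⟩
    let r : (Y₁ ⟶ Y₁) →ₗ[ℂ] (X₁ ⟶ X₁) :=
      { toFun := fun f =>
          { hom := f.hom
            comm := fun n => f.comm ⟨((show ↥N from n) : G), hNK _ (show ↥N from n).2⟩ }
        map_add' := fun f g => rfl
        map_smul' := fun c f => rfl }
    have rinj : Function.Injective r := by
      intro f g h
      apply Action.Hom.ext
      have h2 : (r f).hom = (r g).hom := congrArg Action.Hom.hom h
      exact h2
    have hle : Module.finrank ℂ (Y₁ ⟶ Y₁) ≤ 1 :=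
      hEnd11 ▸ LinearMap.finrank_le_finrank_of_injective rinj
    have hEndY : Module.finrank ℂ (Y₁ ⟶ Y₁) = 1 := le_antisymm hle hpos
    have hEndV₁ : Module.finrank ℂ (V₁ ⟶ V₁) = 1 :=
      CategoryTheory.finrank_endomorphism_simple_eq_one ℂ V₁
    have hsumK : ∑ k : ↥K, χt₁ ↑k * χt₁ ((↑k : G)⁻¹) = (Fintype.card ↥K : ℂ) := by
      have h := sum_char' Y₁ Y₁
      rw [hEndY] at h
      simp only [hY₁c] at h
      simpa using h
    have hsumG : ∑ g : G, χt₁ g * χt₁ g⁻¹ = (Fintype.card G : ℂ) := by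
      have h := sum_char' V₁ V₁
      rw [hEndV₁] at h
      simp only [hV₁c] at h
      simpa using h
    have heq : ∑ g : G, χt₁ g * χt₁ g⁻¹ = ∑ k : ↥K, χt₁ ↑k * χt₁ ((↑k : G)⁻¹) := by
      rw [← Finset.sum_filter_of_ne (p := fun g => g ∈ K)
        (f := fun g => χt₁ g * χt₁ g⁻¹) (s := Finset.univ)]
      · exact Finset.sum_subtype _ (by simp) _
      · intro g _ hne
        have h0 : χt₁ g ≠ 0 := fun h => hne (by rw [h, zero_mul])
        exact hmem g h0
    have hcard : Fintype.card ↥K = Fintype.card G := by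
      have h : (Fintype.card ↥K : ℂ) = (Fintype.card G : ℂ) := by
        rw [← hsumK, ← heq, hsumG]
      exact_mod_cast h
    have hKtop : K = ⊤ := by
      apply Subgroup.eq_top_of_card_eq
      rw [Nat.card_eq_fintype_card, Nat.card_eq_fintype_card, hcard]
    ext g
    have hgK : g ∈ K := by rw [hKtop]; trivial
    have hν1 : ν g = 1 := hgK
    have h3 : a g * (b g)⁻¹ = 1 := hν1
    have hab : a g = b g := mul_inv_eq_one.mp h3
    rw [hab]
  exact ⟨lam, ⟨fun n hn => Units.ext (ccN ⟨n, hn⟩), fun g => key g⟩,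
    fun y hy => uniq y lam hy.1 hy.2 (fun n hn => Units.ext (ccN ⟨n, hn⟩)) (fun g => key g)⟩
end

section
/- Let G be a finite group with normal subgroup N, let θ be a G-invariant irreducible character of N, and let 𝒫 : G → GLₙ(K) be a projective representation associated to the character triple (G,N,θ), where K is an algebraically closed field of characteristic 0. Then for every c ∈ C_G(N), the matrix 𝒫(c) is a scalar matrix. -/
/-- `χ` is the character of an irreducible (finite-dimensional)
`K`-representation of `G`. -/
def IsIrrCharOver (K : Type) [Field K] {G : Type} [Group G] (χ : G → K) : Prop :=
  ∃ V : FDRep K G, CategoryTheory.Simple V ∧ ∀ g : G, V.character g = χ g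

lemma trace_toLinAlgEquiv' {K : Type} [Field K] {n : ℕ} (A : Matrix (Fin n) (Fin n) K) :
    LinearMap.trace K (Fin n → K) (Matrix.toLinAlgEquiv' A) = A.trace := by
  rw [LinearMap.trace_eq_matrix_trace K (Pi.basisFun K (Fin n)),
    LinearMap.toMatrix_eq_toMatrix',
    show (Matrix.toLinAlgEquiv' A : (Fin n → K) →ₗ[K] _) = Matrix.toLin' A from rfl,
    LinearMap.toMatrix'_toLin']

theorem stmt7 {K : Type} [Field K] [IsAlgClosed K] [CharZero K]
    {G : Type} [Group G] [Finite G] (N : Subgroup G) [hN : N.Normal]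
    (θ : N → K) (hθirr : IsIrrCharOver K θ)
    (hθinv : ∀ (g : G) (m : N), θ ⟨g * ↑m * g⁻¹, hN.conj_mem ↑m m.2 g⟩ = θ m)
    (n : ℕ) (P : G → Matrix.GeneralLinearGroup (Fin n) K)
    -- `P` is a projective representation:
    (hproj : ∀ g g' : G, ∃ α : Kˣ,
      (↑(P (g * g')) : Matrix (Fin n) (Fin n) K) =
        (α : K) • ((↑(P g) : Matrix (Fin n) (Fin n) K) * (↑(P g') : Matrix (Fin n) (Fin n) K)))
    -- the restriction of `P` to `N` is an ordinary representation:
    (hNmul : ∀ m m' : N, (↑(P (↑m * ↑m')) : Matrix (Fin n) (Fin n) K) =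
      (↑(P ↑m) : Matrix (Fin n) (Fin n) K) * (↑(P ↑m') : Matrix (Fin n) (Fin n) K))
    -- affording the character `θ`:
    (htrace : ∀ m : N, Matrix.trace (↑(P ↑m) : Matrix (Fin n) (Fin n) K) = θ m)
    -- and `P(gn) = P(g)P(n)`, `P(ng) = P(n)P(g)` for `g ∈ G`, `n ∈ N`:
    (hleft : ∀ (g : G) (m : N), (↑(P (g * ↑m)) : Matrix (Fin n) (Fin n) K) =
      (↑(P g) : Matrix (Fin n) (Fin n) K) * (↑(P ↑m) : Matrix (Fin n) (Fin n) K))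
    (hright : ∀ (g : G) (m : N), (↑(P (↑m * g)) : Matrix (Fin n) (Fin n) K) =
      (↑(P ↑m) : Matrix (Fin n) (Fin n) K) * (↑(P g) : Matrix (Fin n) (Fin n) K)) :
    ∀ c ∈ Subgroup.centralizer (N : Set G), ∃ k : K,
      (↑(P c) : Matrix (Fin n) (Fin n) K) = k • (1 : Matrix (Fin n) (Fin n) K) := by
  classical
  intro c hc
  rcases Nat.eq_zero_or_pos n with hn | hn
  · subst hn; exact ⟨0, Subsingleton.elim _ _⟩
  haveI : NeZero n := ⟨hn.ne'⟩
  haveI : Fintype G := Fintype.ofFinite G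
  -- P restricted to N is 1 at 1
  have hone : (↑(P ((1 : G))) : Matrix (Fin n) (Fin n) K) = 1 := by
    have hu : P ((1 : G)) = P (1 : G) * P (1 : G) := by
      apply Units.ext
      simpa using hNmul 1 1
    have := mul_eq_left.mp hu.symm
    rw [this]; rfl
  -- multiplicative map on N
  let Mh : ↥N →* Matrix (Fin n) (Fin n) K :=
    { toFun := fun m => ↑(P ↑m)
      map_one' := by simpa using hone
      map_mul' := fun m m' => by
        show (↑(P (↑(m * m'))) : Matrix (Fin n) (Fin n) K) = _
        rw [Subgroup.coe_mul]; exact hNmul m m' }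
  -- representation of N
  let ρ : Representation K ↥N (Fin n → K) :=
    (Matrix.toLinAlgEquiv' (R := K) (n := Fin n)).toRingEquiv.toMonoidHom.comp Mh
  have hρ : ∀ m : ↥N, ρ m = Matrix.toLinAlgEquiv' (Mh m) := fun _ => rfl
  let W : FDRep K ↥N := FDRep.of ρ
  have hWρ : W.ρ = ρ := rfl
  have hWchar : ∀ m : ↥N, W.character m = θ m := by
    intro m
    show LinearMap.trace K _ (ρ m) = θ m
    rw [hρ, trace_toLinAlgEquiv']
    exact htrace m
  obtain ⟨V, hVs, hVchar⟩ := hθirr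
  haveI := hVs
  haveI : Fintype ↥N := Fintype.ofFinite _
  haveI : Invertible ((Fintype.card ↥N : K)) :=
    invertibleOfNonzero (by exact_mod_cast Fintype.card_ne_zero)
  haveI : Invertible ((Nat.card ↥N : K)) :=
    invertibleOfNonzero (by exact_mod_cast Nat.card_pos.ne')
  -- orthonormality for V
  have h1 : ⅟ (Fintype.card ↥N : K) • ∑ m : ↥N, θ m * θ m⁻¹ = 1 := by
    have h := FDRep.char_orthonormal (k := K) (G := ↥N) V V
    rw [if_pos ⟨CategoryTheory.Iso.refl V⟩] at h
    simp only [hVchar] at h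
    rw [invOf_eq_inv, smul_eq_mul, Fintype.card_eq_nat_card]
    exact_mod_cast h
  -- dimension of the commutant
  have h2 : (Module.finrank K (Representation.linHom W.ρ W.ρ).invariants) = 1 := by
    have h := FDRep.average_char_eq_finrank_invariants (k := K) (G := ↥N)
      (FDRep.of (Representation.linHom W.ρ W.ρ))
    rw [show (FDRep.of (Representation.linHom W.ρ W.ρ)).ρ = Representation.linHom W.ρ W.ρ
      from FDRep.of_ρ' _] at h
    have hch : ∀ m : ↥N, (FDRep.of (Representation.linHom W.ρ W.ρ)).character m
        = θ m * θ m⁻¹ := by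
      intro m
      rw [FDRep.char_linHom, hWchar, hWchar, mul_comm]
    simp only [hch] at h
    rw [← Fintype.card_eq_nat_card, ← invOf_eq_inv, ← smul_eq_mul, h1] at h
    exact_mod_cast h.symm
  -- the matrix P c gives an element of the commutant
  set A : Matrix (Fin n) (Fin n) K := ↑(P c) with hA
  have hcomm : ∀ m : ↥N, Mh m * A = A * Mh m := by
    intro m
    have h1' : (↑m : G) * c = c * ↑m := Subgroup.mem_centralizer_iff.mp hc ↑m m.2
    calc Mh m * A = ↑(P (↑m * c)) := (hright c m).symm
      _ = ↑(P (c * ↑m)) := by rw [h1']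
      _ = A * Mh m := hleft c m
  have hAinv : Matrix.toLinAlgEquiv' A ∈ (Representation.linHom W.ρ W.ρ).invariants := by
    rw [Representation.mem_invariants]
    intro m
    show Matrix.toLinAlgEquiv' (Mh m) ∘ₗ Matrix.toLinAlgEquiv' A ∘ₗ
      Matrix.toLinAlgEquiv' (Mh m⁻¹) = Matrix.toLinAlgEquiv' A
    have : Mh m * (A * Mh m⁻¹) = A := by
      rw [← mul_assoc, hcomm m, mul_assoc, ← map_mul Mh, mul_inv_cancel, map_one Mh, mul_one]
    calc Matrix.toLinAlgEquiv' (Mh m) ∘ₗ Matrix.toLinAlgEquiv' A ∘ₗ Matrix.toLinAlgEquiv' (Mh m⁻¹)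
        = Matrix.toLinAlgEquiv' (Mh m * (A * Mh m⁻¹)) := by
          rw [map_mul, map_mul]; rfl
      _ = Matrix.toLinAlgEquiv' A := by rw [this]
  -- identity is in the commutant, and commutant has dim 1
  have hIinv : (Matrix.toLinAlgEquiv' (1 : Matrix (Fin n) (Fin n) K))
      ∈ (Representation.linHom W.ρ W.ρ).invariants := by
    rw [Representation.mem_invariants]
    intro m
    show Matrix.toLinAlgEquiv' (Mh m) ∘ₗ Matrix.toLinAlgEquiv' 1 ∘ₗ
      Matrix.toLinAlgEquiv' (Mh m⁻¹) = Matrix.toLinAlgEquiv' 1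
    calc Matrix.toLinAlgEquiv' (Mh m) ∘ₗ Matrix.toLinAlgEquiv' 1 ∘ₗ Matrix.toLinAlgEquiv' (Mh m⁻¹)
        = Matrix.toLinAlgEquiv' (Mh m * (1 * Mh m⁻¹)) := by rw [map_mul, map_mul]; rfl
      _ = Matrix.toLinAlgEquiv' 1 := by
          rw [one_mul, ← map_mul Mh, mul_inv_cancel, map_one Mh]
  have hone_ne : (Matrix.toLinAlgEquiv' (1 : Matrix (Fin n) (Fin n) K)) ≠ 0 := by
    intro h
    have := map_one (Matrix.toLinAlgEquiv' (R := K) (n := Fin n))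
    rw [this] at h
    have h0 : ((1 : (Fin n → K) →ₗ[K] (Fin n → K)) (fun _ => 1)) = 0 := by rw [h]; rfl
    have : (fun _ => (1 : K)) = (0 : Fin n → K) := h0
    have := congrFun this ⟨0, hn⟩
    simp at this
  have hspan : Submodule.span K {Matrix.toLinAlgEquiv' (1 : Matrix (Fin n) (Fin n) K)}
      = (Representation.linHom W.ρ W.ρ).invariants := by
    apply Submodule.eq_of_le_of_finrank_le
    · rw [Submodule.span_le, Set.singleton_subset_iff]; exact hIinv
    · exact h2.le.trans (le_of_eq (finrank_span_singleton hone_ne).symm)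
  have hAmem : Matrix.toLinAlgEquiv' A ∈
      Submodule.span K {Matrix.toLinAlgEquiv' (1 : Matrix (Fin n) (Fin n) K)} := by
    rw [hspan]; exact hAinv
  obtain ⟨k, hk⟩ := Submodule.mem_span_singleton.mp hAmem
  refine ⟨k, ?_⟩
  apply (Matrix.toLinAlgEquiv' (R := K) (n := Fin n)).injective
  rw [map_smul]
  exact hk.symm
end

section
/- Let A be a finite perfect group with trivial center and B a finite solvable group. Then Aut(A × B) is isomorphic to Aut(A) × Aut(B), via the map sending (α,β) to the automorphism acting as α on A × {1} and β on {1} × B. -/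
private lemma perfect_to_solvable' {A B : Type*} [Group A] [Group B]
    (hA : commutator A = ⊤) (hB : IsSolvable B) (f : A →* B) (a : A) : f a = 1 := by
  have htop : ∀ n, derivedSeries A n = ⊤ := by
    intro n
    induction n with
    | zero => rfl
    | succ n ih => rw [derivedSeries_succ, ih]; exact hA
  obtain ⟨n, hn⟩ := hB
  have h := map_derivedSeries_le_derivedSeries f n
  rw [htop n, hn] at h
  have : f a ∈ (⊥ : Subgroup B) := h ⟨a, trivial, rfl⟩
  simpa using this

theorem stmt10 {A B : Type*} [Group A] [Group B] [Finite A] [Finite B]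
    (hA : commutator A = ⊤) (hZ : Subgroup.center A = ⊥) (hB : IsSolvable B) :
    ∃ e : (MulAut A × MulAut B) ≃* MulAut (A × B),
      ∀ p : MulAut A × MulAut B, e p = MulEquiv.prodCongr p.1 p.2 := by
  -- the forward monoid hom
  have hmul : ∀ p q : MulAut A × MulAut B,
      MulEquiv.prodCongr (p*q).1 (p*q).2
        = MulEquiv.prodCongr p.1 p.2 * MulEquiv.prodCongr q.1 q.2 := by
    intro p q; ext x <;> rfl
  let φ : (MulAut A × MulAut B) →* MulAut (A × B) :=
    MonoidHom.mk' (fun p => MulEquiv.prodCongr p.1 p.2) hmul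
  have hinj : Function.Injective φ := by
    intro p q h
    have h1 : ∀ x : A × B, MulEquiv.prodCongr p.1 p.2 x = MulEquiv.prodCongr q.1 q.2 x := by
      intro x; rw [show MulEquiv.prodCongr p.1 p.2 = φ p from rfl,
        show MulEquiv.prodCongr q.1 q.2 = φ q from rfl, h]
    have hp1 : p.1 = q.1 := by
      ext a; have := congrArg Prod.fst (h1 (a, 1)); exact this
    have hp2 : p.2 = q.2 := by
      ext b; have := congrArg Prod.snd (h1 (1, b)); exact this
    exact Prod.ext hp1 hp2
  have hsurj : Function.Surjective φ := by
    intro f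
    -- f maps A×1 into A×1, and so does f⁻¹
    have hsnd : ∀ g : (A × B) ≃* (A × B), ∀ a : A, (g (a, 1)).2 = 1 := by
      intro g a
      exact perfect_to_solvable' hA hB
        ((MonoidHom.snd A B).comp (g.toMonoidHom.comp (MonoidHom.inl A B))) a
    -- f is "onto" A×1 and symm is onto A×1
    have hsurjA : ∀ a : A, f ((f.symm (a, 1)).1, 1) = (a, 1) := by
      intro a
      have h2 := hsnd f.symm a
      have : ((f.symm (a, 1)).1, (1 : B)) = f.symm (a, 1) := Prod.ext rfl h2.symm
      rw [this, f.apply_symm_apply]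
    have hsurjA' : ∀ a : A, f.symm ((f (a, 1)).1, 1) = (a, 1) := by
      intro a
      have h2 := hsnd f a
      have : ((f (a, 1)).1, (1 : B)) = f (a, 1) := Prod.ext rfl h2.symm
      rw [this, f.symm_apply_apply]
    -- first components of images of 1×B are central, hence 1
    have hfst : ∀ b : B, (f (1, b)).1 = 1 := by
      intro b
      have hc : (f (1, b)).1 ∈ Subgroup.center A := by
        rw [Subgroup.mem_center_iff]
        intro a
        have hcomm : f (1, b) * (a, 1) = (a, 1) * f (1, b) := by
          conv_lhs => rw [← hsurjA a]
          conv_rhs => rw [← hsurjA a]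
          rw [← map_mul, ← map_mul]
          congr 1
          exact Prod.ext (by simp [mul_comm]) (by simp)
        have := congrArg Prod.fst hcomm
        simpa using this.symm
      rw [hZ] at hc
      simpa using hc
    have hfst' : ∀ b : B, (f.symm (1, b)).1 = 1 := by
      intro b
      have hc : (f.symm (1, b)).1 ∈ Subgroup.center A := by
        rw [Subgroup.mem_center_iff]
        intro a
        have hcomm : f.symm (1, b) * (a, 1) = (a, 1) * f.symm (1, b) := by
          conv_lhs => rw [← hsurjA' a]
          conv_rhs => rw [← hsurjA' a]
          rw [← map_mul, ← map_mul]
          congr 1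
          exact Prod.ext (by simp [mul_comm]) (by simp)
        have := congrArg Prod.fst hcomm
        simpa using this.symm
      rw [hZ] at hc
      simpa using hc
    -- the two automorphisms
    refine ⟨(⟨⟨fun a => (f (a, 1)).1, fun a => (f.symm (a, 1)).1, ?_, ?_⟩, ?_⟩,
            ⟨⟨fun b => (f (1, b)).2, fun b => (f.symm (1, b)).2, ?_, ?_⟩, ?_⟩), ?_⟩
    · intro a
      have h2 := hsnd f a
      simp only
      have : ((f (a, 1)).1, (1 : B)) = f (a, 1) := Prod.ext rfl h2.symm
      rw [this, f.symm_apply_apply]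
    · intro a
      have h2 := hsnd f.symm a
      simp only
      have : ((f.symm (a, 1)).1, (1 : B)) = f.symm (a, 1) := Prod.ext rfl h2.symm
      rw [this, f.apply_symm_apply]
    · intro a a'
      simp only
      have : ((a : A) * a', (1 : B)) = (a, 1) * (a', 1) := by simp
      rw [this, map_mul]; rfl
    · intro b
      have h1 := hfst b
      simp only
      have : ((1 : A), (f (1, b)).2) = f (1, b) := Prod.ext h1.symm rfl
      rw [this, f.symm_apply_apply]
    · intro b
      have h1 := hfst' b
      simp only
      have : ((1 : A), (f.symm (1, b)).2) = f.symm (1, b) := Prod.ext h1.symm rfl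
      rw [this, f.apply_symm_apply]
    · intro b b'
      simp only
      have : ((1 : A), (b : B) * b') = (1, b) * (1, b') := by simp
      rw [this, map_mul]; rfl
    · -- φ of this pair equals f
      refine MulEquiv.ext fun x => ?_
      obtain ⟨a, b⟩ := x
      show ((f (a, 1)).1, (f (1, b)).2) = f (a, b)
      have hx : ((a, b) : A × B) = (a, 1) * (1, b) := by simp
      rw [hx, map_mul]
      exact Prod.ext (by simp [hfst b]) (by simp [hsnd f a])
  exact ⟨MulEquiv.ofBijective φ ⟨hinj, hsurj⟩, fun p => rfl⟩
end

section
/- Let G be a finite group with normal subgroups N ≤ H ≤ G such that H ⊴ G, G/H is cyclic, and G/N is abelian. Fix a ∈ G whose image generates G/H. Let χ be a G-invariant irreducible complex character of N. Then χ extends to an irreducible character of G if and only if there exists an extension ψ ∈ Irr(H) of χ with ψᵃ = ψ (i.e., ψ is invariant under conjugation by a). -/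
open CategoryTheory Module Representation
noncomputable section
variable {Γ Γ' : Type} [Group Γ] [Group Γ']

def restrRep (f : Γ' →* Γ) (X : FDRep ℂ Γ) : FDRep ℂ Γ' :=
  FDRep.of ((X.ρ : Γ →* (X →ₗ[ℂ] X)).comp f)

lemma restr_char (f : Γ' →* Γ) (X : FDRep ℂ Γ) (g : Γ') :
    (restrRep f X).character g = X.character (f g) := rfl

def IsInvSub (X : FDRep ℂ Γ) (p : Submodule ℂ X) : Prop := ∀ (g : Γ) x, x ∈ p → X.ρ g x ∈ p

def subFD (X : FDRep ℂ Γ) (p : Submodule ℂ X) (hp : IsInvSub X p) : FDRep ℂ Γ :=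
  FDRep.of {
    toFun := fun g => (X.ρ g).restrict (fun x hx => hp g x hx)
    map_one' := by ext x; simp
    map_mul' := by intro g h; ext x; simp [LinearMap.restrict_apply] }

def inclFD (X : FDRep ℂ Γ) (p : Submodule ℂ X) (hp : IsInvSub X p) : subFD X p hp ⟶ X :=
  ⟨FGModuleCat.ofHom p.subtype, by intro g; rfl⟩

lemma nontrivial_of_simple (X : FDRep ℂ Γ) [Simple X] : Nontrivial X := by
  by_contra hs
  rw [not_nontrivial_iff_subsingleton] at hs
  apply id_nonzero X
  apply Action.Hom.ext
  apply FGModuleCat.hom_ext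
  apply LinearMap.ext
  intro x
  exact @Subsingleton.elim _ hs _ _

-- Lemma A
lemma subm_trivial_of_simple (X : FDRep ℂ Γ) [Simple X] (p : Submodule ℂ X)
    (hp : IsInvSub X p) : p = ⊥ ∨ p = ⊤ := by
  by_cases hb : p = ⊥
  · exact Or.inl hb
  right
  obtain ⟨x, hxp, hx0⟩ := Submodule.exists_mem_ne_zero_of_ne_bot hb
  have hne : inclFD X p hp ≠ 0 := by
    intro h
    have := congrArg Action.Hom.hom h
    have := LinearMap.congr_fun (congrArg (fun f => f.hom.hom) this) ⟨x, hxp⟩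
    exact hx0 this
  have hmono : Mono (inclFD X p hp) := by
    constructor
    intro Z u v huv
    apply Action.Hom.ext
    apply FGModuleCat.hom_ext
    apply LinearMap.ext
    intro z
    have h1 := congrArg Action.Hom.hom huv
    rw [Action.comp_hom, Action.comp_hom] at h1
    have h1' : ((inclFD X p hp).hom.hom.hom).comp u.hom.hom.hom = ((inclFD X p hp).hom.hom.hom).comp v.hom.hom.hom := congrArg (fun f => f.hom.hom) h1
    have h2 := LinearMap.congr_fun h1' z
    exact Subtype.ext h2
  have : IsIso (inclFD X p hp) := isIso_of_mono_of_nonzero hne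
  -- surjectivity
  rw [Submodule.eq_top_iff']
  intro y
  obtain ⟨g, hg1, hg2⟩ := this.out
  have h2 := congrArg Action.Hom.hom hg2
  have h2y := LinearMap.congr_fun (congrArg (fun f => f.hom.hom) h2) y
  have : (inclFD X p hp).hom.hom.hom (g.hom.hom.hom y) = y := by
    simpa [Action.comp_hom] using h2y
  rw [← this]
  exact ((g.hom.hom.hom) y).2

-- Lemma B
lemma simple_of_subm (X : FDRep ℂ Γ) (hnt : Nontrivial X)
    (h : ∀ p : Submodule ℂ X, IsInvSub X p → p = ⊥ ∨ p = ⊤) : Simple X := by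
  constructor
  intro Y f hm
  constructor
  · intro hiso h0
    obtain ⟨g, hg1, hg2⟩ := hiso.out
    obtain ⟨x, hx⟩ := exists_ne (0 : X)
    apply hx
    rw [h0, Limits.comp_zero] at hg2
    have h2' := LinearMap.congr_fun (congrArg (fun f => f.hom.hom.hom) hg2) x
    calc x = (𝟙 X : X ⟶ X).hom.hom.hom x := rfl
      _ = (0 : X ⟶ X).hom.hom.hom x := h2'.symm
      _ = 0 := rfl
  · intro hf0
    have hcomm : ∀ (g : Γ) (y : Y), f.hom.hom.hom (Y.ρ g y) = X.ρ g (f.hom.hom.hom y) := by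
      intro g y
      have h1' : f.hom.hom.hom.comp (Y.ρ g) = (X.ρ g).comp f.hom.hom.hom := congrArg (fun f => f.hom.hom) (f.comm g)
      exact LinearMap.congr_fun h1' y
    have hrange : IsInvSub X (LinearMap.range f.hom.hom.hom) := by
      rintro g x ⟨y, rfl⟩
      exact ⟨Y.ρ g y, hcomm g y⟩
    have hrt : LinearMap.range f.hom.hom.hom = ⊤ := by
      rcases h _ hrange with hb | ht
      · exfalso; apply hf0
        apply Action.Hom.ext
        apply FGModuleCat.hom_ext
        apply LinearMap.range_eq_bot.mp hb
      · exact ht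
    have hker : IsInvSub Y (LinearMap.ker f.hom.hom.hom) := by
      intro g y hy
      have hy' : f.hom.hom.hom y = 0 := LinearMap.mem_ker.mp hy
      have : f.hom.hom.hom (Y.ρ g y) = 0 := by rw [hcomm g y, hy', map_zero]
      exact LinearMap.mem_ker.mpr this
    have hk0 : LinearMap.ker f.hom.hom.hom = ⊥ := by
      let k := inclFD Y _ hker
      have hcomp : k ≫ f = (0 : subFD Y _ hker ⟶ X) := by
        apply Action.Hom.ext
        rw [Action.comp_hom, Action.zero_hom]
        apply FGModuleCat.hom_ext
        apply LinearMap.ext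
        intro z
        have hz : f.hom.hom.hom z.1 = 0 := LinearMap.mem_ker.mp z.2
        exact hz
      have h0 : (0 : subFD Y _ hker ⟶ Y) ≫ f = 0 := by simp
      have hkz := hm.right_cancellation _ _ (hcomp.trans h0.symm)
      rw [Submodule.eq_bot_iff]
      intro y hy
      have h2 := congrArg (fun f => f.hom.hom.hom) hkz
      have h3 := LinearMap.congr_fun h2 (⟨y, hy⟩ : LinearMap.ker f.hom.hom.hom)
      calc y = k.hom.hom.hom (⟨y, hy⟩ : LinearMap.ker f.hom.hom.hom) := rfl
        _ = (0 : subFD Y _ hker ⟶ Y).hom.hom.hom (⟨y, hy⟩ : LinearMap.ker f.hom.hom.hom) := h3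
        _ = 0 := by rw [Action.zero_hom]; rfl
    have hbij : Function.Bijective f.hom.hom.hom :=
      ⟨LinearMap.ker_eq_bot.mp hk0, LinearMap.range_eq_top.mp hrt⟩
    let e := LinearEquiv.ofBijective f.hom.hom.hom hbij
    have hcomm' : ∀ (g : Γ) (x : X), e.symm (X.ρ g x) = Y.ρ g (e.symm x) := by
      intro g x
      apply hbij.1
      calc f.hom.hom.hom (e.symm (X.ρ g x)) = e (e.symm (X.ρ g x)) := rfl
        _ = X.ρ g x := e.apply_symm_apply _
        _ = X.ρ g (e (e.symm x)) := by rw [e.apply_symm_apply]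
        _ = X.ρ g (f.hom.hom.hom (e.symm x)) := rfl
        _ = f.hom.hom.hom (Y.ρ g (e.symm x)) := (hcomm g _).symm
    refine ⟨⟨⟨FGModuleCat.ofHom e.symm.toLinearMap, ?_⟩, ?_, ?_⟩⟩
    · intro g
      apply FGModuleCat.hom_ext
      apply LinearMap.ext
      intro x
      exact hcomm' g x
    · apply Action.Hom.ext
      rw [Action.comp_hom]
      apply FGModuleCat.hom_ext
      apply LinearMap.ext
      intro y
      show e.symm (e y) = y
      exact e.symm_apply_apply y
    · apply Action.Hom.ext
      rw [Action.comp_hom]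
      apply FGModuleCat.hom_ext
      apply LinearMap.ext
      intro x
      show e (e.symm x) = x
      exact e.apply_symm_apply x

-- Schur: every endomorphism of a simple FDRep is scalar
lemma endo_scalar (X : FDRep ℂ Γ) [Simple X] (f : X ⟶ X) :
    ∃ c : ℂ, f = c • 𝟙 X := by
  have h1 : finrank ℂ (X ⟶ X) = 1 := finrank_endomorphism_simple_eq_one ℂ X
  have hid : (𝟙 X : X ⟶ X) ≠ 0 := id_nonzero X
  rw [finrank_eq_one_iff_of_nonzero' (𝟙 X) hid] at h1
  obtain ⟨c, hc⟩ := h1 f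
  exact ⟨c, hc.symm⟩

-- F2
lemma finrank_hom_eq [Fintype Γ] [Invertible (Fintype.card Γ : ℂ)] (V W : FDRep ℂ Γ) :
    ⅟ (Fintype.card Γ : ℂ) • ∑ g : Γ, V.character g * W.character g⁻¹ =
      (finrank ℂ (W ⟶ V) : ℂ) := by
  have : Invertible (Nat.card Γ : ℂ) := by rwa [Nat.card_eq_fintype_card]
  rw [← FDRep.scalar_product_char_eq_finrank_equivariant W V, smul_eq_mul, invOf_eq_inv,
    Nat.card_eq_fintype_card]

-- averaging: equivariant projection onto an invariant submodule
lemma avg_proj [Fintype Γ] (X : FDRep ℂ Γ) (p : Submodule ℂ X) (hp : IsInvSub X p) :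
    ∃ f : X ⟶ X, (∀ x, f.hom x ∈ p) ∧ (∀ x ∈ p, f.hom x = x) := by
  obtain ⟨q, hq⟩ := Submodule.exists_isCompl p
  set P0 : X →ₗ[ℂ] X := p.subtype ∘ₗ (p.projectionOnto q hq) with hP0
  have hP0p : ∀ x, P0 x ∈ p := fun x => (p.projectionOnto q hq x).2
  have hP0id : ∀ x ∈ p, P0 x = x := by
    intro x hx
    simp [hP0, Submodule.projectionOnto_apply_left hq ⟨x, hx⟩]
  set c : ℂ := (Fintype.card Γ : ℂ) with hc
  have hc0 : c ≠ 0 := by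
    simp [hc, Fintype.card_ne_zero]
  set S : X →ₗ[ℂ] X := ∑ g : Γ, (X.ρ g) ∘ₗ P0 ∘ₗ (X.ρ g⁻¹) with hS
  have hScomm : ∀ γ : Γ, S ∘ₗ (X.ρ γ) = (X.ρ γ) ∘ₗ S := by
    intro γ
    apply LinearMap.ext
    intro x
    simp only [hS, LinearMap.comp_apply, LinearMap.sum_apply, map_sum]
    apply Fintype.sum_equiv (Equiv.mulLeft γ⁻¹)
    intro g
    simp only [Equiv.coe_mulLeft]
    have h1 : X.ρ g⁻¹ (X.ρ γ x) = X.ρ (γ⁻¹ * g)⁻¹ x := by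
      calc X.ρ g⁻¹ (X.ρ γ x) = (X.ρ g⁻¹ * X.ρ γ) x := rfl
        _ = X.ρ (g⁻¹ * γ) x := by rw [← map_mul]
        _ = X.ρ (γ⁻¹ * g)⁻¹ x := by congr 1; group
    have h2 : ∀ y, X.ρ γ (X.ρ (γ⁻¹ * g) y) = X.ρ g y := by
      intro y
      calc X.ρ γ (X.ρ (γ⁻¹ * g) y) = (X.ρ γ * X.ρ (γ⁻¹ * g)) y := rfl
        _ = X.ρ (γ * (γ⁻¹ * g)) y := by rw [← map_mul]
        _ = X.ρ g y := by congr 1; group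
    rw [h1, ← h2]
  set π : X →ₗ[ℂ] X := c⁻¹ • S with hπ
  have hπcomm : ∀ γ : Γ, π ∘ₗ (X.ρ γ) = (X.ρ γ) ∘ₗ π := by
    intro γ
    rw [hπ, LinearMap.smul_comp, hScomm γ]
    ext x
    simp
  refine ⟨⟨FGModuleCat.ofHom π, ?_⟩, ?_, ?_⟩
  · intro γ
    apply FGModuleCat.hom_ext
    exact hπcomm γ
  · intro x
    show π x ∈ p
    rw [hπ]
    apply Submodule.smul_mem
    rw [hS]
    simp only [LinearMap.sum_apply, LinearMap.comp_apply]
    apply Submodule.sum_mem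
    intro g _
    exact hp g _ (hP0p _)
  · intro x hx
    show π x = x
    have hterm : ∀ g : Γ, X.ρ g (P0 (X.ρ g⁻¹ x)) = x := by
      intro g
      rw [hP0id _ (hp g⁻¹ x hx)]
      calc X.ρ g (X.ρ g⁻¹ x) = (X.ρ g * X.ρ g⁻¹) x := rfl
        _ = X.ρ (g * g⁻¹) x := by rw [← map_mul]
        _ = x := by rw [mul_inv_cancel, map_one]; rfl
    have hSx : S x = (Fintype.card Γ : ℂ) • x := by
      rw [hS]
      simp only [LinearMap.sum_apply, LinearMap.comp_apply]
      rw [Finset.sum_congr rfl (fun g _ => hterm g)]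
      rw [Finset.sum_const, Finset.card_univ]
      rw [← Nat.cast_smul_eq_nsmul ℂ]
    rw [hπ]
    simp only [LinearMap.smul_apply]
    rw [hSx, ← hc, smul_smul, inv_mul_cancel₀ hc0, one_smul]

lemma simple_of_norm_one [Fintype Γ] (X : FDRep ℂ Γ) (hnt : Nontrivial X)
    (h1 : finrank ℂ (X ⟶ X) = 1) : Simple X := by
  apply simple_of_subm X hnt
  intro p hp
  by_cases hb : p = ⊥
  · exact Or.inl hb
  right
  obtain ⟨f, hf1, hf2⟩ := avg_proj X p hp
  have hid : (𝟙 X : X ⟶ X) ≠ 0 := by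
    intro h0
    obtain ⟨x, hx⟩ := exists_ne (0 : X)
    apply hx
    calc x = (𝟙 X : X ⟶ X).hom.hom.hom x := rfl
      _ = (0 : X ⟶ X).hom.hom.hom x := by rw [h0]
      _ = 0 := by rw [Action.zero_hom]; rfl
  rw [finrank_eq_one_iff_of_nonzero' (𝟙 X) hid] at h1
  obtain ⟨c, hc⟩ := h1 f
  obtain ⟨x0, hx0p, hx00⟩ := Submodule.exists_mem_ne_zero_of_ne_bot hb
  have hfx : ∀ x, f.hom x = c • x := by
    intro x
    calc f.hom x = (c • 𝟙 X : X ⟶ X).hom x := by rw [hc]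
      _ = c • x := by rw [Action.smul_hom]; rfl
  have hc1 : c = 1 := by
    have hcx := hf2 x0 hx0p
    rw [hfx x0] at hcx
    have h2 : (c - 1) • x0 = 0 := by rw [sub_smul, one_smul, hcx, sub_self]
    rcases smul_eq_zero.mp h2 with h | h
    · exact sub_eq_zero.mp h
    · exact absurd h hx00
  rw [Submodule.eq_top_iff']
  intro x
  have hfx' := hfx x
  rw [hc1, one_smul] at hfx'
  rw [← hfx']
  exact hf1 x

-- generic conjugation induction in a group
lemma conj_zpow_rel {H Mo : Type*} [Group H] [Group Mo] (ρu : H →* Mo) (σ : MulAut H)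
    (u : Mo) (base : ∀ h, u * ρu h = ρu (σ h) * u) :
    ∀ (k : ℤ) (h : H), u ^ k * ρu h = ρu ((σ ^ k) h) * u ^ k := by
  have base' : ∀ h, u⁻¹ * ρu h = ρu (σ⁻¹ h) * u⁻¹ := by
    intro h
    have hb := base (σ⁻¹ h)
    rw [MulAut.apply_inv_self] at hb
    calc u⁻¹ * ρu h = u⁻¹ * (ρu h * u) * u⁻¹ := by group
      _ = u⁻¹ * (u * ρu (σ⁻¹ h)) * u⁻¹ := by rw [hb]
      _ = ρu (σ⁻¹ h) * u⁻¹ := by group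
  intro k
  induction k using Int.induction_on with
  | zero => intro h; simp
  | succ n ih =>
      intro h
      have h1 : (σ ^ ((n : ℤ) + 1)) h = (σ ^ (n : ℤ)) (σ h) := by
        rw [zpow_add_one, MulAut.mul_apply]
      rw [h1, zpow_add_one]
      calc u ^ (n : ℤ) * u * ρu h = u ^ (n : ℤ) * (u * ρu h) := by rw [mul_assoc]
        _ = u ^ (n : ℤ) * (ρu (σ h) * u) := by rw [base]
        _ = (u ^ (n : ℤ) * ρu (σ h)) * u := by rw [mul_assoc]
        _ = (ρu ((σ ^ (n : ℤ)) (σ h)) * u ^ (n : ℤ)) * u := by rw [ih]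
        _ = ρu ((σ ^ (n : ℤ)) (σ h)) * (u ^ (n : ℤ) * u) := by rw [mul_assoc]
  | pred n ih =>
      intro h
      have h1 : (σ ^ (-(n : ℤ) - 1)) h = (σ ^ (-(n : ℤ))) (σ⁻¹ h) := by
        rw [sub_eq_add_neg, zpow_add, zpow_neg_one, MulAut.mul_apply]
      rw [h1, sub_eq_add_neg, zpow_add, zpow_neg_one]
      calc u ^ (-(n : ℤ)) * u⁻¹ * ρu h = u ^ (-(n : ℤ)) * (u⁻¹ * ρu h) := by rw [mul_assoc]
        _ = u ^ (-(n : ℤ)) * (ρu (σ⁻¹ h) * u⁻¹) := by rw [base']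
        _ = (u ^ (-(n : ℤ)) * ρu (σ⁻¹ h)) * u⁻¹ := by rw [mul_assoc]
        _ = (ρu ((σ ^ (-(n : ℤ))) (σ⁻¹ h)) * u ^ (-(n : ℤ))) * u⁻¹ := by rw [ih]
        _ = ρu ((σ ^ (-(n : ℤ))) (σ⁻¹ h)) * (u ^ (-(n : ℤ)) * u⁻¹) := by rw [mul_assoc]

section Extend
variable {G : Type} [Group G] [Finite G] (H : Subgroup G) [hH : H.Normal]

lemma extend_rep (a : G) (hgen : ∀ x : G ⧸ H, x ∈ Subgroup.zpowers ((a : G ⧸ H)))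
    (W : FDRep ℂ H) [hWs : Simple W]
    (hinv : ∀ h : H, W.character ((MulAut.conjNormal a) h) = W.character h) :
    ∃ X : FDRep ℂ G, Simple X ∧ ∀ h : H, X.character ↑h = W.character h := by
  have : Fintype G := Fintype.ofFinite G
  have : Fintype H := Fintype.ofFinite H
  have : Fintype (G ⧸ H) := Fintype.ofFinite _
  haveI : Invertible ((Fintype.card H : ℂ)) :=
    invertibleOfNonzero (by exact_mod_cast Fintype.card_ne_zero)
  set σ : MulAut ↥H := MulAut.conjNormal a with hσ
  -- the conjugate representation
  set Wa : FDRep ℂ ↥H := restrRep σ.toMonoidHom W with hWa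
  have hWant : Nontrivial Wa := nontrivial_of_simple W
  have hWaS : Simple Wa := by
    apply simple_of_subm Wa hWant
    intro p hp
    have hp' : IsInvSub W p := by
      intro h x hx
      have := hp (σ.symm h) x hx
      have he : Wa.ρ (σ.symm h) = W.ρ h := by
        show W.ρ (σ (σ.symm h)) = W.ρ h
        rw [MulEquiv.apply_symm_apply]
      rwa [he] at this
    exact subm_trivial_of_simple W p hp'
  have hchareq : ∀ h : ↥H, Wa.character h = W.character h := fun h => hinv h
  -- get an intertwining iso W ≅ Wa
  have hfr : (finrank ℂ (W ⟶ Wa) : ℂ) = (finrank ℂ (W ⟶ W) : ℂ) := by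
    rw [← finrank_hom_eq Wa W, ← finrank_hom_eq W W]
    congr 1
    apply Finset.sum_congr rfl
    intro g _
    rw [hchareq]
  have hfr1 : finrank ℂ (W ⟶ Wa) = 1 := by
    have h2 : finrank ℂ (W ⟶ W) = 1 := finrank_endomorphism_simple_eq_one ℂ W
    have := Nat.cast_injective (R := ℂ) hfr
    rw [this, h2]
  have hnontrivhom : Nontrivial (W ⟶ Wa) := by
    apply Module.nontrivial_of_finrank_pos (R := ℂ)
    rw [hfr1]; norm_num
  obtain ⟨f, hf0⟩ := exists_ne (0 : W ⟶ Wa)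
  have : IsIso f := isIso_of_hom_simple hf0
  obtain ⟨finv, hfinv1, hfinv2⟩ := this.out
  -- T as a unit of End
  set E := Module.End ℂ W with hE
  have hc1 := congrArg Action.Hom.hom hfinv1
  rw [Action.comp_hom] at hc1
  have hc2 := congrArg Action.Hom.hom hfinv2
  rw [Action.comp_hom] at hc2
  set Tu : Eˣ := ⟨f.hom.hom.hom, finv.hom.hom.hom,
    (by
      show f.hom.hom.hom ∘ₗ finv.hom.hom.hom = LinearMap.id
      exact congrArg (fun f => f.hom.hom) hc2),
    (by
      show finv.hom.hom.hom ∘ₗ f.hom.hom.hom = LinearMap.id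
      exact congrArg (fun f => f.hom.hom) hc1)⟩ with hTu
  set ρu : ↥H →* Eˣ := Representation.asGroupHom W.ρ with hρu
  have hρuval : ∀ h : ↥H, ((ρu h : E)) = W.ρ h := fun h => Representation.asGroupHom_apply W.ρ h
  have keyU : ∀ h : ↥H, Tu * ρu h = ρu (σ h) * Tu := by
    intro h
    apply Units.ext
    show (Tu : E) * (ρu h : E) = (ρu (σ h) : E) * (Tu : E)
    rw [hρuval, hρuval]
    show f.hom.hom.hom ∘ₗ W.ρ h = W.ρ (σ h) ∘ₗ f.hom.hom.hom
    exact congrArg (fun f => f.hom.hom) (f.comm h)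
  have keyT : ∀ (k : ℤ) (h : ↥H), Tu ^ k * ρu h = ρu ((σ ^ k) h) * Tu ^ k :=
    conj_zpow_rel ρu σ Tu keyU
  -- order facts
  set m : ℕ := Fintype.card (G ⧸ H) with hm
  have hm0 : 0 < m := Fintype.card_pos
  have horderOf : orderOf ((a : G ⧸ H)) = m := by
    rw [hm, ← Nat.card_eq_fintype_card]
    exact orderOf_eq_card_of_forall_mem_zpowers hgen
  have hdvd : ∀ z : ℤ, a ^ z ∈ H → (m : ℤ) ∣ z := by
    intro z hz
    rw [← horderOf]
    rw [orderOf_dvd_iff_zpow_eq_one]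
    have : ((a ^ z : G) : G ⧸ H) = 1 := (QuotientGroup.eq_one_iff _).mpr hz
    rwa [QuotientGroup.mk_zpow] at this
  have ham : a ^ (m : ℤ) ∈ H := by
    have h1 : ((a : G ⧸ H)) ^ (m : ℕ) = 1 := pow_card_eq_one
    have : ((a ^ (m : ℤ) : G) : G ⧸ H) = 1 := by
      rw [QuotientGroup.mk_zpow, zpow_natCast, h1]
    exact (QuotientGroup.eq_one_iff _).mp this
  set am : ↥H := ⟨a ^ (m : ℤ), ham⟩ with ham'
  have hσm : ∀ h : ↥H, (σ ^ (m : ℤ)) h = am * h * am⁻¹ := by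
    intro h
    have h1 : (σ ^ (m : ℤ)) = MulAut.conjNormal (a ^ (m : ℤ)) := by
      rw [hσ, ← map_zpow]
    rw [h1]
    apply Subtype.ext
    rw [MulAut.conjNormal_apply]
    simp [ham']
  -- D commutes with the action
  set D : Eˣ := (ρu am)⁻¹ * Tu ^ (m : ℤ) with hD
  have hDcomm : ∀ h : ↥H, D * ρu h = ρu h * D := by
    intro h
    have h1 := keyT (m : ℤ) h
    rw [hσm h, map_mul, map_mul] at h1
    have h2 : ρu am⁻¹ = (ρu am)⁻¹ := map_inv ρu am
    rw [h2] at h1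
    calc D * ρu h = (ρu am)⁻¹ * (Tu ^ (m : ℤ) * ρu h) := by rw [hD, mul_assoc]
      _ = (ρu am)⁻¹ * (ρu am * ρu h * (ρu am)⁻¹ * Tu ^ (m : ℤ)) := by rw [h1]
      _ = ρu h * ((ρu am)⁻¹ * Tu ^ (m : ℤ)) := by group
      _ = ρu h * D := by rw [hD]
  -- Schur: D is a scalar
  have hDhom : ∀ h : ↥H, (D : E) ∘ₗ W.ρ h = W.ρ h ∘ₗ (D : E) := by
    intro h
    have := congrArg Units.val (hDcomm h)
    rw [Units.val_mul, Units.val_mul, hρuval] at this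
    exact this
  set fD : W ⟶ W := ⟨FGModuleCat.ofHom (D : E), fun h => by exact congrArg FGModuleCat.ofHom (hDhom h)⟩ with hfD
  obtain ⟨c, hc⟩ := endo_scalar W fD
  have hDval : (D : E) = c • LinearMap.id := by
    have := congrArg (fun f => f.hom.hom.hom) hc
    exact this
  have hWnt : Nontrivial W := nontrivial_of_simple W
  have hcne : c ≠ 0 := by
    intro hc0
    obtain ⟨x, hx⟩ := exists_ne (0 : W)
    apply hx
    have h1 : (D⁻¹ : Eˣ) * D = 1 := inv_mul_cancel D
    have h2 := congrArg Units.val h1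
    rw [Units.val_mul] at h2
    have h3 := LinearMap.congr_fun
      (show ((D⁻¹ : Eˣ) : E) ∘ₗ (D : E) = LinearMap.id from h2) x
    rw [LinearMap.comp_apply] at h3
    rw [hDval, hc0] at h3
    simpa using h3.symm
  -- scale T by an m-th root of c
  obtain ⟨z, hz⟩ := IsAlgClosed.exists_pow_nat_eq c hm0
  have hzne : z ≠ 0 := by
    intro h0
    apply hcne
    rw [← hz, h0, zero_pow hm0.ne']
  set zu : Eˣ := ⟨z • 1, z⁻¹ • 1,
    (by rw [smul_mul_smul_comm, mul_inv_cancel₀ hzne, one_mul, one_smul]),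
    (by rw [smul_mul_smul_comm, inv_mul_cancel₀ hzne, one_mul, one_smul])⟩ with hzu
  have hzcentral : ∀ u : Eˣ, zu * u = u * zu := by
    intro u
    apply Units.ext
    show (z • (1 : E)) * (u : E) = (u : E) * (z • (1 : E))
    rw [smul_mul_assoc, one_mul, mul_smul_comm, mul_one]
  have hzinvcentral : ∀ u : Eˣ, zu⁻¹ * u = u * zu⁻¹ := by
    intro u
    have := hzcentral u
    calc zu⁻¹ * u = zu⁻¹ * (u * zu) * zu⁻¹ := by group
      _ = zu⁻¹ * (zu * u) * zu⁻¹ := by rw [this]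
      _ = u * zu⁻¹ := by group
  set Su : Eˣ := zu⁻¹ * Tu with hSu
  have keyS : ∀ h : ↥H, Su * ρu h = ρu (σ h) * Su := by
    intro h
    calc Su * ρu h = zu⁻¹ * (Tu * ρu h) := by rw [hSu, mul_assoc]
      _ = zu⁻¹ * (ρu (σ h) * Tu) := by rw [keyU]
      _ = (zu⁻¹ * ρu (σ h)) * Tu := by rw [mul_assoc]
      _ = (ρu (σ h) * zu⁻¹) * Tu := by rw [hzinvcentral]
      _ = ρu (σ h) * Su := by rw [hSu, mul_assoc]
  have keySk : ∀ (k : ℤ) (h : ↥H), Su ^ k * ρu h = ρu ((σ ^ k) h) * Su ^ k :=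
    conj_zpow_rel ρu σ Su keyS
  -- Su ^ m = ρu am
  have hzum : zu ^ m = D := by
    apply Units.ext
    show ((zu ^ m : Eˣ) : E) = (D : E)
    rw [Units.val_pow_eq_pow_val]
    show (z • (1 : E)) ^ m = (D : E)
    rw [smul_pow, one_pow, hz, hDval, Module.End.one_eq_id]
  have hSm : Su ^ (m : ℤ) = ρu am := by
    have hcom : Commute zu⁻¹ Tu := by
      unfold Commute SemiconjBy
      rw [hzinvcentral Tu]
    have h1 : Su ^ (m : ℕ) = (zu⁻¹) ^ (m : ℕ) * Tu ^ (m : ℕ) := hcom.mul_pow m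
    have hTm : Tu ^ (m : ℤ) = ρu am * D := by
      rw [hD]
      group
    have h2 : Tu ^ (m : ℕ) = ρu am * D := by
      rw [← hTm, zpow_natCast]
    rw [zpow_natCast, h1, h2]
    have h3 : (zu⁻¹) ^ (m : ℕ) = (zu ^ (m : ℕ))⁻¹ := inv_pow zu m
    rw [h3, hzum]
    calc D⁻¹ * (ρu am * D) = D⁻¹ * (D * ρu am) := by rw [hDcomm am]
      _ = ρu am := by group
  -- choice of exponents
  have hex : ∀ g : G, ∃ k : ℤ, a ^ (-k) * g ∈ H := by
    intro g
    obtain ⟨k, hk⟩ := Subgroup.mem_zpowers_iff.mp (hgen (g : G ⧸ H))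
    refine ⟨k, ?_⟩
    rw [← QuotientGroup.eq_one_iff]
    rw [QuotientGroup.mk_mul, QuotientGroup.mk_zpow, zpow_neg, hk, inv_mul_cancel]
  choose kk hkk using hex
  set Φ : G → Eˣ := fun g => Su ^ (kk g) * ρu ⟨a ^ (-(kk g)) * g, hkk g⟩ with hΦ
  -- well-definedness
  have WD : ∀ (g : G) (k : ℤ) (hk : a ^ (-k) * g ∈ H),
      Φ g = Su ^ k * ρu ⟨a ^ (-k) * g, hk⟩ := by
    intro g k hk
    set j : ℤ := kk g with hj
    have hjmem := hkk g
    have hdiff : a ^ (k - j) ∈ H := by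
      have h1 : (a ^ (-j) * g) * (a ^ (-k) * g)⁻¹ ∈ H := H.mul_mem hjmem (H.inv_mem hk)
      have h2 : (a ^ (-j) * g) * (a ^ (-k) * g)⁻¹ = a ^ (k - j) := by
        group
      rwa [h2] at h1
    obtain ⟨q, hq⟩ := hdvd _ hdiff
    have hk' : k = j + (m : ℤ) * q := by omega
    have hSk : Su ^ k = Su ^ j * ρu (am ^ q) := by
      rw [hk', zpow_add, zpow_mul, hSm, map_zpow]
    have helt : (⟨a ^ (-j) * g, hjmem⟩ : ↥H) = am ^ q * ⟨a ^ (-k) * g, hk⟩ := by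
      apply Subtype.ext
      show a ^ (-j) * g = ((am ^ q : ↥H) : G) * (a ^ (-k) * g)
      rw [show ((am ^ q : ↥H) : G) = (a ^ (m : ℤ)) ^ q from by
        rw [ham', SubgroupClass.coe_zpow]]
      rw [hk']
      group
    rw [hΦ]
    show Su ^ j * ρu ⟨a ^ (-j) * g, hjmem⟩ = Su ^ k * ρu ⟨a ^ (-k) * g, hk⟩
    rw [helt, map_mul, hSk, mul_assoc]
  -- multiplicativity
  have hmul : ∀ g1 g2 : G, Φ (g1 * g2) = Φ g1 * Φ g2 := by
    intro g1 g2
    set k1 : ℤ := kk g1 with hk1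
    set k2 : ℤ := kk g2 with hk2
    have h1mem := hkk g1
    have h2mem := hkk g2
    set h1 : ↥H := ⟨a ^ (-k1) * g1, h1mem⟩ with hh1
    set h2 : ↥H := ⟨a ^ (-k2) * g2, h2mem⟩ with hh2
    set hh : ↥H := (σ ^ (-k2)) h1 * h2 with hhh
    have hσcoe : (((σ ^ (-k2)) h1 : ↥H) : G) = a ^ (-k2) * (a ^ (-k1) * g1) * a ^ k2 := by
      have hc : (σ ^ (-k2)) = MulAut.conjNormal (a ^ (-k2)) := by
        rw [hσ, ← map_zpow]
      rw [hc]
      rw [show ((MulAut.conjNormal (a ^ (-k2)) h1 : ↥H) : G)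
            = a ^ (-k2) * (h1 : G) * (a ^ (-k2))⁻¹ from MulAut.conjNormal_apply _ _]
      rw [hh1]
      group
    have hhcoe : ((hh : ↥H) : G) = a ^ (-(k1 + k2)) * (g1 * g2) := by
      rw [hhh, Subgroup.coe_mul, hσcoe, hh2]
      group
    have hmem12 : a ^ (-(k1 + k2)) * (g1 * g2) ∈ H := by
      rw [← hhcoe]; exact hh.2
    have hWD12 := WD (g1 * g2) (k1 + k2) hmem12
    have helt2 : (⟨a ^ (-(k1 + k2)) * (g1 * g2), hmem12⟩ : ↥H) = hh :=
      Subtype.ext hhcoe.symm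
    rw [hWD12, helt2, hhh, map_mul]
    have hswap : Su ^ k2 * ρu ((σ ^ (-k2)) h1) = ρu h1 * Su ^ k2 := by
      have := keySk k2 ((σ ^ (-k2)) h1)
      rw [show (σ ^ k2) ((σ ^ (-k2)) h1) = h1 from by
        rw [← MulAut.mul_apply, ← zpow_add, add_neg_cancel, zpow_zero]
        rfl] at this
      exact this
    calc Su ^ (k1 + k2) * (ρu ((σ ^ (-k2)) h1) * ρu h2)
        = Su ^ k1 * (Su ^ k2 * ρu ((σ ^ (-k2)) h1)) * ρu h2 := by
          rw [zpow_add]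
          group
      _ = Su ^ k1 * (ρu h1 * Su ^ k2) * ρu h2 := by rw [hswap]
      _ = (Su ^ k1 * ρu h1) * (Su ^ k2 * ρu h2) := by group
  -- value on H
  have hΦH : ∀ h : ↥H, Φ ↑h = ρu h := by
    intro h
    have hmem0 : a ^ (-(0 : ℤ)) * (h : G) ∈ H := by
      rw [neg_zero, zpow_zero, one_mul]; exact h.2
    rw [WD ↑h 0 hmem0, zpow_zero, one_mul]
    congr 1
    apply Subtype.ext
    show a ^ (-(0 : ℤ)) * (h : G) = (h : G)
    rw [neg_zero, zpow_zero, one_mul]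
  -- build the extension
  set Φm : G →* Eˣ := MonoidHom.mk' Φ hmul with hΦm
  set ρt : Representation ℂ G W := (Units.coeHom E).comp Φm with hρt
  set X : FDRep ℂ G := FDRep.of ρt with hX
  have hXρ : ∀ h : ↥H, X.ρ (↑h : G) = W.ρ h := by
    intro h
    show ρt ↑h = W.ρ h
    rw [hρt]
    show ((Φm ↑h : Eˣ) : E) = W.ρ h
    show ((Φ ↑h : Eˣ) : E) = W.ρ h
    rw [hΦH h, hρuval]
  have hXnt : Nontrivial X := hWnt
  have hXsimple : Simple X := by
    apply simple_of_subm X hXnt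
    intro p hp
    have hp' : IsInvSub W p := by
      intro h x hx
      have := hp ↑h x hx
      rwa [hXρ h] at this
    exact subm_trivial_of_simple W p hp'
  refine ⟨X, hXsimple, ?_⟩
  intro h
  show LinearMap.trace ℂ _ (X.ρ ↑h) = LinearMap.trace ℂ _ (W.ρ h)
  rw [hXρ h]

end Extend

end

theorem stmt11 {G : Type} [Group G] [Finite G] (N H : Subgroup G)
    [hN : N.Normal] [hH : H.Normal] (hNH : N ≤ H) (a : G)
    (hgen : ∀ x : G ⧸ H, x ∈ Subgroup.zpowers ((a : G ⧸ H)))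
    (habel : ∀ x y : G ⧸ N, x * y = y * x)
    (χ : N → ℂ) (hχ : IsIrrChar χ)
    (hinv : ∀ (g : G) (n : N), χ ⟨g * ↑n * g⁻¹, hN.conj_mem ↑n n.2 g⟩ = χ n) :
    (∃ χt : G → ℂ, IsIrrChar χt ∧ ∀ n : N, χt ↑n = χ n) ↔
      ∃ ψ : H → ℂ, IsIrrChar ψ ∧ (∀ n : N, ψ ⟨↑n, hNH n.2⟩ = χ n) ∧
        (∀ h : H, ψ ⟨a * ↑h * a⁻¹, hH.conj_mem ↑h h.2 a⟩ = ψ h) := by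
  have : Fintype G := Fintype.ofFinite G
  have : Fintype N := Fintype.ofFinite N
  haveI : Invertible ((Fintype.card N : ℂ)) :=
    invertibleOfNonzero (by exact_mod_cast Fintype.card_ne_zero)
  obtain ⟨U, hUs, hUchar⟩ := hχ
  haveI := hUs
  constructor
  · rintro ⟨χt, ⟨V, hVs, hVchar⟩, hres⟩
    haveI := hVs
    set A : FDRep ℂ N := restrRep N.subtype V with hA
    have hAchar : ∀ n : N, A.character n = U.character n := by
      intro n
      calc A.character n = V.character ↑n := rfl
        _ = χt ↑n := hVchar _
        _ = χ n := hres n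
        _ = U.character n := (hUchar n).symm
    have hAfr : (finrank ℂ (A ⟶ A) : ℂ) = (finrank ℂ (U ⟶ U) : ℂ) := by
      rw [← finrank_hom_eq A A, ← finrank_hom_eq U U]
      congr 1
      apply Finset.sum_congr rfl
      intro n _
      rw [hAchar, hAchar]
    have hAfr1 : finrank ℂ (A ⟶ A) = 1 := by
      have h2 : finrank ℂ (U ⟶ U) = 1 := finrank_endomorphism_simple_eq_one ℂ U
      rw [h2] at hAfr
      exact_mod_cast hAfr
    have hVnt : Nontrivial V := nontrivial_of_simple V
    have hAnt : Nontrivial A := hVnt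
    have hAsimple : Simple A := simple_of_norm_one A hAnt hAfr1
    set B : FDRep ℂ H := restrRep H.subtype V with hB
    have hBnt : Nontrivial B := hVnt
    have hBsimple : Simple B := by
      apply simple_of_subm B hBnt
      intro p hp
      have hp' : IsInvSub A p := by
        intro n x hx
        exact hp ⟨↑n, hNH n.2⟩ x hx
      exact subm_trivial_of_simple A p hp'
    refine ⟨B.character, ⟨B, hBsimple, fun _ => rfl⟩, ?_, ?_⟩
    · intro n
      calc B.character ⟨↑n, hNH n.2⟩ = V.character ↑n := rfl
        _ = χt ↑n := hVchar _
        _ = χ n := hres n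
    · intro h
      show V.character (a * ↑h * a⁻¹) = V.character ↑h
      exact FDRep.char_conj V ↑h a
  · rintro ⟨ψ, ⟨W, hWs, hWchar⟩, hψN, hψa⟩
    haveI := hWs
    have hinvW : ∀ h : H, W.character ((MulAut.conjNormal a) h) = W.character h := by
      intro h
      have h2 : (MulAut.conjNormal a) h = (⟨a * ↑h * a⁻¹, hH.conj_mem ↑h h.2 a⟩ : H) :=
        Subtype.ext (MulAut.conjNormal_apply a h)
      rw [hWchar, h2, hψa, ← hWchar]
    obtain ⟨X, hXs, hXchar⟩ := extend_rep H a hgen W hinvW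
    refine ⟨X.character, ⟨X, hXs, fun _ => rfl⟩, ?_⟩
    intro n
    calc X.character ↑n = X.character ↑(⟨↑n, hNH n.2⟩ : H) := rfl
      _ = W.character ⟨↑n, hNH n.2⟩ := hXchar _
      _ = ψ ⟨↑n, hNH n.2⟩ := hWchar _
      _ = χ n := hψN _
end

section
/- Let G be a finite group, N ⊴ G, and let χ̃ ∈ Irr(G) be an extension of χ ∈ Irr(N). Let λ be a linear character of G trivial on N, i.e., a linear character of G/N inflated to G. Then χ̃·λ is again an irreducible character of G extending χ, and χ̃·λ = χ̃ if and only if λ is trivial. -/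
open CategoryTheory Module Representation FiniteDimensional

noncomputable section

namespace Stmt17Aux

variable {G : Type} [Group G]

/-- The representation twisted by a linear character. -/
def twistRep (V : FDRep ℂ G) (lam : G →* ℂˣ) : Representation ℂ G V where
  toFun g := (lam g : ℂ) • V.ρ g
  map_one' := by simp
  map_mul' g h := by
    simp only [map_mul, Units.val_mul]
    rw [smul_mul_smul_comm]

def twist (V : FDRep ℂ G) (lam : G →* ℂˣ) : FDRep ℂ G := FDRep.of (twistRep V lam)

lemma twist_ρ (V : FDRep ℂ G) (lam : G →* ℂˣ) (g : G) :
    (twist V lam).ρ g = (lam g : ℂ) • V.ρ g := rfl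

lemma twist_character (V : FDRep ℂ G) (lam : G →* ℂˣ) (g : G) :
    (twist V lam).character g = (lam g : ℂ) * V.character g := by
  simp [FDRep.character, twist_ρ, map_smul]; exact (LinearMap.trace ℂ _).map_smul (lam g : ℂ) (V.ρ g)

/-- transfer a morphism into a twist -/
def untwistHom {Y V : FDRep ℂ G} {lam : G →* ℂˣ} (f : Y ⟶ twist V lam) :
    twist Y lam⁻¹ ⟶ V where
  hom := f.hom
  comm := by
    intro g
    ext x
    have h := congrArg (fun (φ : Y.V ⟶ (twist V lam).V) => φ x) (f.comm g)
    simp only [comp_apply] at h ⊢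
    show f.hom ((((lam g)⁻¹ : ℂˣ) : ℂ) • Y.ρ g x) = V.ρ g (f.hom x)
    have h' : f.hom (Y.ρ g x) = (lam g : ℂ) • V.ρ g (f.hom x) := h
    rw [map_smul, h']
    exact inv_smul_smul (lam g) _

lemma hom_eq_zero_iff {Y V : FDRep ℂ G} (f : Y ⟶ V) : f = 0 ↔ f.hom = 0 :=
  ⟨fun h => h ▸ Action.zero_hom, fun h => Action.hom_ext _ _ (h.trans Action.zero_hom.symm)⟩

lemma isIso_hom_iff {Y V : FDRep ℂ G} (f : Y ⟶ V) : IsIso f ↔ IsIso f.hom :=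
  ⟨fun _ => inferInstanceAs (IsIso ((Action.forget _ _).map f)),
   fun _ => Action.isIso_of_hom_isIso f⟩

lemma simple_twist (V : FDRep ℂ G) (lam : G →* ℂˣ) [Simple V] : Simple (twist V lam) := by
  constructor
  intro Y f hm
  haveI hmono : Mono (untwistHom f) := by
    constructor
    intro Z u v huv
    have h2 : untwistHom u ≫ f = untwistHom v ≫ f := by
      apply Action.hom_ext
      have h1 := congrArg Action.Hom.hom huv
      exact h1
    have h3 := (cancel_mono f).mp h2
    apply Action.hom_ext
    have h4 := congrArg Action.Hom.hom h3
    exact h4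
  have key := Simple.mono_isIso_iff_nonzero (untwistHom f)
  have e1 : IsIso f ↔ IsIso (untwistHom f) := by
    rw [isIso_hom_iff f, isIso_hom_iff (untwistHom f)]
    exact Iff.rfl
  have e2 : f = 0 ↔ untwistHom f = 0 := by
    rw [hom_eq_zero_iff f, hom_eq_zero_iff (untwistHom f)]
    exact Iff.rfl
  rw [e1, key, not_iff_not]
  exact e2.symm

variable {H : Type} [Group H] [Fintype H]

lemma norm_one (V : FDRep ℂ H) [Simple V] :
    (Fintype.card H : ℂ)⁻¹ * ∑ h : H, V.character h * V.character h⁻¹ = 1 := by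
  haveI : Invertible (Nat.card H : ℂ) := invertibleOfNonzero (Nat.cast_ne_zero.mpr Nat.card_pos.ne')
  have h := FDRep.char_orthonormal (k := ℂ) V V
  rw [if_pos ⟨Iso.refl V⟩, Nat.card_eq_fintype_card] at h
  exact h

lemma iso_of_char_eq (V W : FDRep ℂ H) [Simple V] [Simple W]
    (hVW : ∀ g, V.character g = W.character g) : Nonempty (V ≅ W) := by
  haveI : Invertible (Nat.card H : ℂ) := invertibleOfNonzero (Nat.cast_ne_zero.mpr Nat.card_pos.ne')
  have h := FDRep.char_orthonormal (k := ℂ) V W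
  rw [Nat.card_eq_fintype_card] at h
  by_contra hc
  rw [if_neg hc] at h
  have h1 := norm_one V
  simp only [← hVW] at h
  have h2 : (Fintype.card H : ℂ)⁻¹ * ∑ h : H, V.character h * V.character h⁻¹ = 0 := h
  exact one_ne_zero (h1.symm.trans h2)

lemma finrank_hom (V W : FDRep ℂ H) :
    (finrank ℂ (V ⟶ W) : ℂ) = (Fintype.card H : ℂ)⁻¹ * ∑ h : H, V.character h⁻¹ * W.character h := by
  haveI : Invertible (Nat.card H : ℂ) := invertibleOfNonzero (Nat.cast_ne_zero.mpr Nat.card_pos.ne')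
  have h := FDRep.average_char_eq_finrank_invariants (FDRep.of (linHom V.ρ W.ρ))
  rw [show (FDRep.of (linHom V.ρ W.ρ)).ρ = linHom V.ρ W.ρ from FDRep.of_ρ' _,
    Nat.card_eq_fintype_card] at h
  have e : finrank ℂ ↥(linHom V.ρ W.ρ).invariants = finrank ℂ (V ⟶ W) :=
    (linHom.invariantsEquivFDRepHom V W).finrank_eq
  calc (finrank ℂ (V ⟶ W) : ℂ)
      = (finrank ℂ ↥(linHom V.ρ W.ρ).invariants : ℂ) := by exact_mod_cast e.symm
    _ = (Fintype.card H : ℂ)⁻¹ * ∑ h : H, (FDRep.of (linHom V.ρ W.ρ)).character h := h.symm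
    _ = (Fintype.card H : ℂ)⁻¹ * ∑ h : H, V.character h⁻¹ * W.character h := by
        congr 1
        exact Finset.sum_congr rfl fun x _ => FDRep.char_linHom V W x

end Stmt17Aux

end

theorem stmt17 {G : Type} [Group G] [Finite G] (N : Subgroup G) [hN : N.Normal]
    (χ : N → ℂ) (hχ : IsIrrChar χ)
    (χt : G → ℂ) (hχt : IsIrrChar χt) (hres : ∀ n : N, χt ↑n = χ n)
    (lam : G →* ℂˣ) (hlam : ∀ n ∈ N, lam n = 1) :
    IsIrrChar (fun g => χt g * (lam g : ℂ)) ∧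
      (∀ n : N, χt ↑n * (lam ↑n : ℂ) = χ n) ∧
      ((fun g => χt g * (lam g : ℂ)) = χt ↔ lam = 1) := by
  classical
  letI : Fintype G := Fintype.ofFinite G
  letI : Fintype ↥N := Fintype.ofFinite ↥N
  obtain ⟨V, hVs, hVchar⟩ := hχt
  obtain ⟨W₀, hW₀s, hW₀char⟩ := hχ
  haveI := hVs
  haveI := hW₀s
  open Stmt17Aux in
  refine ⟨⟨twist V lam, simple_twist V lam, fun g => by
      rw [twist_character, hVchar, mul_comm]⟩,
    fun n => by rw [hlam ↑n n.2, Units.val_one, mul_one]; exact hres n, ?_, ?_⟩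
  · -- injectivity: if the twisted character equals the original one, `lam` is trivial
    intro heq
    set W := Stmt17Aux.twist V lam with hW
    haveI : CategoryTheory.Simple W := Stmt17Aux.simple_twist V lam
    -- existence of a nonzero vector
    have hid : (𝟙 V : V ⟶ V) ≠ 0 := CategoryTheory.id_nonzero V
    have hVnz : ∃ x : V, x ≠ 0 := by
      by_contra hckk
      push_neg at hckk
      apply hid
      apply Action.hom_ext
      ext x
      show x = (0 : V →ₗ[ℂ] V) x
      rw [hckk x]
      simp
    obtain ⟨x0, hx0⟩ := hVnz
    have hinj : ∀ (g : G) (x : V), V.ρ g x = 0 → x = 0 := by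
      intro g x hgx
      have : x = V.ρ g⁻¹ (V.ρ g x) := by
        rw [← Module.End.mul_apply, ← map_mul, inv_mul_cancel]
        simp
      rw [this, hgx, map_zero]
    -- the characters of V and W agree
    have hWchar : ∀ g, V.character g = W.character g := by
      intro g
      rw [Stmt17Aux.twist_character, hVchar, mul_comm]
      have h2 := congrFun heq g
      exact h2.symm
    obtain ⟨i⟩ := Stmt17Aux.iso_of_char_eq V W hWchar
    set T := FDRep.isoToLinearEquiv i with hTdef
    have hT : ∀ g : G, W.ρ g = T.conj (V.ρ g) := fun g => FDRep.Iso.conj_ρ i g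
    -- T commutes with the action of N
    have hTn : ∀ (n : ↥N) (y : V), T ((V.ρ ↑n) y) = (V.ρ ↑n) (T y) := by
      intro n y
      have h1 : W.ρ ↑n (T y) = T (V.ρ ↑n (T.symm (T y))) := by
        rw [hT ↑n, LinearEquiv.conj_apply]
        rfl
      rw [T.symm_apply_apply] at h1
      have h2 : W.ρ ↑n (T y) = ((lam ↑n : ℂˣ) : ℂ) • (V.ρ ↑n) (T y) := rfl
      rw [hlam ↑n n.2, Units.val_one, one_smul] at h2
      rw [← h1, h2]
    -- the restriction of V to N
    set Vres : FDRep ℂ ↥N := FDRep.of (V.ρ.comp N.subtype) with hVres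
    have hreschar : ∀ n : ↥N, Vres.character n = V.character ↑n := fun n => rfl
    let T' : Vres ⟶ Vres :=
      { hom := by exact FGModuleCat.ofHom T.toLinearMap
        comm := by
          intro n
          ext y
          exact hTn n y }
    have hrk : finrank ℂ (Vres ⟶ Vres) = 1 := by
      have h1 := Stmt17Aux.finrank_hom Vres Vres
      have h2 := Stmt17Aux.norm_one W₀
      have hcc : ∀ n : ↥N, Vres.character n = W₀.character n := by
        intro n
        rw [hreschar, hVchar, hres n, ← hW₀char]
      rw [show (∑ n : ↥N, Vres.character n⁻¹ * Vres.character n)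
            = ∑ n : ↥N, W₀.character n * W₀.character n⁻¹ from
          Finset.sum_congr rfl fun n _ => by rw [hcc, hcc, mul_comm], h2] at h1
      exact_mod_cast h1
    have hid1 : (𝟙 Vres : Vres ⟶ Vres) ≠ 0 := by
      intro hz
      apply hx0
      have h3 := congrArg (fun (φ : Vres ⟶ Vres) => φ.hom x0) hz
      simp only [Action.zero_hom] at h3
      exact h3
    obtain ⟨c, hc⟩ := (finrank_eq_one_iff_of_nonzero' (𝟙 Vres) hid1).mp hrk T'
    have hcx : ∀ y : V, T y = c • y := by
      intro y
      have h3 := congrArg (fun (φ : Vres ⟶ Vres) => φ.hom y) hc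
      simp only [Action.smul_hom] at h3
      exact h3.symm
    have hc0 : c ≠ 0 := by
      intro h0
      exact hx0 (T.injective (show T x0 = T 0 by rw [hcx, hcx, h0, zero_smul, zero_smul]))
    have hsymm : ∀ y : W, T.symm y = c⁻¹ • y := by
      intro y
      apply T.injective
      rw [T.apply_symm_apply]
      exact (smul_inv_smul₀ hc0 y).symm.trans (hcx (c⁻¹ • y)).symm
    -- conclude
    apply MonoidHom.ext
    intro g
    apply Units.ext
    have hv : V.ρ g x0 ≠ 0 := fun h => hx0 (hinj g x0 h)
    have hWg : W.ρ g (T x0) = T (V.ρ g (T.symm (T x0))) := by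
      rw [hT g, LinearEquiv.conj_apply]
      rfl
    rw [T.symm_apply_apply] at hWg
    have h5 : W.ρ g (T x0) = ((lam g : ℂˣ) : ℂ) • (V.ρ g) (T x0) := rfl
    have e1 : T (V.ρ g x0) = c • V.ρ g x0 := hcx _
    have e2 : (V.ρ g) (T x0) = c • V.ρ g x0 := by rw [hcx x0, map_smul]
    have h6 : ((lam g : ℂˣ) : ℂ) • (c • V.ρ g x0) = c • V.ρ g x0 := by
      rw [← e2, ← h5, hWg, e1]
      exact e2.symm
    have h7 : ((lam g : ℂˣ) : ℂ) • (V.ρ g) x0 = (V.ρ g) x0 := by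
      apply smul_right_injective _ hc0
      show c • (((lam g : ℂˣ) : ℂ) • (V.ρ g) x0) = c • ((V.ρ g) x0)
      rw [smul_comm]
      exact h6
    have h8 : (((lam g : ℂˣ) : ℂ) - 1) • (V.ρ g) x0 = 0 := by
      rw [sub_smul, one_smul, h7, sub_self]
    rcases smul_eq_zero.mp h8 with h9 | h9
    · rw [sub_eq_zero] at h9
      simpa using h9
    · exact absurd h9 hv
  · intro h1
    funext g
    rw [h1]
    simp
end
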